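/- arXiv:2603.06908 — 4 statements merged into one kernel-verified Lean document; each statement's English description precedes it below -/
import Mathlib

section
/- Let n ≥ 1, let Ω ⊂ ℝⁿ be a nonempty bounded open set, let p ∈ (1,∞) be a real number, and let m ≥ 1 be a natural number. Assume that for every real number s with s < p−1 there exists a constant C_s > 0 such that the weighted Hardy inequality ∫_Ω |φ(x)|^p ρ(x)^{s−p} dx ≤ C_s ∫_Ω |∇φ(x)|^p ρ(x)^s dx holds for all φ ∈ C_c^∞(Ω), where |∇φ(x)| is the Euclidean norm of the gradient. Then there exists a constant C > 0 such that ∫_Ω |φ(x)|^p ρ(x)^{−mp} dx ≤ C ∫_Ω ‖D^m φ(x)‖^p dx for all φ ∈ C_c^∞(Ω), where ‖D^m φ(x)‖ denotes the operator norm of the m-th (iterated Fréchet) derivative of φ at x. -/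
open MeasureTheory Metric

lemma aux_coord_le_norm {n : ℕ} (v : EuclideanSpace ℝ (Fin n)) (i : Fin n) : |v i| ≤ ‖v‖ := by
  rw [EuclideanSpace.norm_eq]
  have h1 : |v i| = Real.sqrt (‖v i‖ ^ 2) := by
    rw [Real.norm_eq_abs, Real.sqrt_sq_eq_abs, abs_abs]
  rw [h1]
  exact Real.sqrt_le_sqrt (Finset.single_le_sum (f := fun j => ‖v j‖ ^ 2)
    (fun j _ => by positivity) (Finset.mem_univ i))

lemma aux_opnorm {n : ℕ} (L : EuclideanSpace ℝ (Fin n) →L[ℝ] ℝ) :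
    ‖L‖ ≤ ∑ i, |L (EuclideanSpace.single i 1)| := by
  refine L.opNorm_le_bound (Finset.sum_nonneg fun i _ => abs_nonneg _) fun v => ?_
  have hv : ∑ i, v i • EuclideanSpace.single i (1:ℝ) = v := by
    have h := (EuclideanSpace.basisFun (Fin n) ℝ).sum_repr v
    simpa [EuclideanSpace.basisFun_apply, EuclideanSpace.basisFun_repr] using h
  have hLv : L v = ∑ i, v i * L (EuclideanSpace.single i 1) := by
    conv_lhs => rw [← hv]
    rw [map_sum]; simp [smul_eq_mul]
  calc ‖L v‖ = |∑ i, v i * L (EuclideanSpace.single i 1)| := by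
        rw [Real.norm_eq_abs, hLv]
    _ ≤ ∑ i, |v i * L (EuclideanSpace.single i 1)| := Finset.abs_sum_le_sum_abs _ _
    _ ≤ ∑ i, |L (EuclideanSpace.single i 1)| * ‖v‖ := by
        refine Finset.sum_le_sum fun i _ => ?_
        rw [abs_mul, mul_comm]
        exact mul_le_mul_of_nonneg_left (aux_coord_le_norm v i) (abs_nonneg _)
    _ = (∑ i, |L (EuclideanSpace.single i 1)|) * ‖v‖ := (Finset.sum_mul _ _ _).symm

lemma aux_sum_rpow {n : ℕ} {p : ℝ} (hp : 1 ≤ p) (a : Fin n → ℝ) (ha : ∀ i, 0 ≤ a i) :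
    (∑ i, a i) ^ p ≤ (n : ℝ) ^ p * ∑ i, a i ^ p := by
  have hp0 : (0:ℝ) < p := lt_of_lt_of_le one_pos hp
  have hS : 0 ≤ ∑ i, a i ^ p := Finset.sum_nonneg fun i _ => Real.rpow_nonneg (ha i) p
  have key : ∀ i : Fin n, a i ≤ (∑ j, a j ^ p) ^ (1/p) := by
    intro i
    have h1 : a i ^ p ≤ ∑ j, a j ^ p :=
      Finset.single_le_sum (fun j _ => Real.rpow_nonneg (ha j) p) (Finset.mem_univ i)
    have h2 := Real.rpow_le_rpow (Real.rpow_nonneg (ha i) p) h1 (by positivity : (0:ℝ) ≤ 1/p)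
    rwa [← Real.rpow_mul (ha i), mul_one_div, div_self hp0.ne', Real.rpow_one] at h2
  have h2 : ∑ i, a i ≤ (n:ℝ) * (∑ j, a j ^ p) ^ (1/p) := by
    calc ∑ i, a i ≤ ∑ _i : Fin n, (∑ j, a j ^ p) ^ (1/p) :=
          Finset.sum_le_sum fun i _ => key i
      _ = (n:ℝ) * (∑ j, a j ^ p) ^ (1/p) := by
          rw [Finset.sum_const, Finset.card_univ, Fintype.card_fin, nsmul_eq_mul]
  have h3 := Real.rpow_le_rpow (Finset.sum_nonneg fun i _ => ha i) h2 hp0.le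
  rwa [Real.mul_rpow (by positivity) (by positivity), ← Real.rpow_mul hS, one_div,
    inv_mul_cancel₀ hp0.ne', Real.rpow_one] at h3

lemma aux_integrableOn {n : ℕ} (Ω K : Set (EuclideanSpace ℝ (Fin n)))
    (f : EuclideanSpace ℝ (Fin n) → ℝ) (hK : IsCompact K) (hKΩ : K ⊆ Ω)
    (hf : ContinuousOn f Ω) (h0 : ∀ x, x ∉ K → f x = 0) :
    IntegrableOn f Ω := by
  have h1 : IntegrableOn f K := (hf.mono hKΩ).integrableOn_compact hK
  have heq : K.indicator f = f := by
    funext x; by_cases hx : x ∈ K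
    · simp [Set.indicator_of_mem hx]
    · simp [Set.indicator_of_notMem hx, h0 x hx]
  rw [← heq, IntegrableOn, integrable_indicator_iff hK.measurableSet, IntegrableOn,
    Measure.restrict_restrict hK.measurableSet]
  exact h1.mono_set Set.inter_subset_left

lemma hardy_iter (n : ℕ) (hn : 1 ≤ n) (Ω : Set (EuclideanSpace ℝ (Fin n)))
    (hΩo : IsOpen Ω) (hΩne : Ω.Nonempty) (hΩb : Bornology.IsBounded Ω)
    (p : ℝ) (hp1 : 1 < p)
    (hHardy : ∀ s : ℝ, s < p - 1 → ∃ C : ℝ, 0 < C ∧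
      ∀ φ : EuclideanSpace ℝ (Fin n) → ℝ, ContDiff ℝ (⊤ : ℕ∞) φ →
        HasCompactSupport φ → tsupport φ ⊆ Ω →
        ∫ x in Ω, |φ x| ^ p * infDist x (frontier Ω) ^ (s - p) ≤
          C * ∫ x in Ω, ‖fderiv ℝ φ x‖ ^ p * infDist x (frontier Ω) ^ s)
    (k : ℕ) :
    ∃ C : ℝ, 0 < C ∧
      ∀ φ : EuclideanSpace ℝ (Fin n) → ℝ, ContDiff ℝ (⊤ : ℕ∞) φ →
        HasCompactSupport φ → tsupport φ ⊆ Ω →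
        ∫ x in Ω, |φ x| ^ p * infDist x (frontier Ω) ^ (-((k : ℝ) * p)) ≤
          C * ∫ x in Ω, ‖iteratedFDeriv ℝ k φ x‖ ^ p := by
  have hp0 : (0:ℝ) < p := lt_trans one_pos hp1
  have hle : ∀ j : ℕ, (j : WithTop ℕ∞) ≤ ((⊤ : ℕ∞) : WithTop ℕ∞) := fun j => by
    exact_mod_cast le_top
  have hle' : ((⊤ : ℕ∞) : WithTop ℕ∞) + 1 ≤ ((⊤ : ℕ∞) : WithTop ℕ∞) := by
    exact_mod_cast le_top
  -- the frontier is nonempty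
  have hFne : (frontier Ω).Nonempty := by
    by_contra h
    rw [Set.not_nonempty_iff_eq_empty] at h
    have hcl : IsClopen Ω := isClopen_iff_frontier_eq_empty.2 h
    haveI : Nonempty (Fin n) := ⟨⟨0, hn⟩⟩
    rcases isClopen_iff.1 hcl with h1 | h1
    · exact hΩne.ne_empty h1
    · exact NormedSpace.unbounded_univ ℝ (EuclideanSpace ℝ (Fin n)) (h1 ▸ hΩb)
  have hρpos : ∀ x ∈ Ω, 0 < infDist x (frontier Ω) := by
    intro x hx
    refine (IsClosed.notMem_iff_infDist_pos isClosed_frontier hFne).1 ?_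
    intro hmem
    rw [hΩo.frontier_eq] at hmem
    exact hmem.2 hx
  induction k with
  | zero =>
    refine ⟨1, one_pos, fun φ hφ hφc hφs => ?_⟩
    rw [one_mul]
    refine le_of_eq (integral_congr_ae (Filter.Eventually.of_forall fun x => ?_))
    simp [Real.rpow_zero, norm_iteratedFDeriv_zero, Real.norm_eq_abs]
  | succ k IH =>
    obtain ⟨Ck, hCk0, hCk⟩ := IH
    set s : ℝ := -((k : ℝ) * p) with hs_def
    have hkp : (0:ℝ) ≤ (k:ℝ) * p := by positivity
    obtain ⟨Cs, hCs0, hCs⟩ := hHardy s (by rw [hs_def]; linarith)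
    have hn0 : (0:ℝ) < (n:ℝ) := by exact_mod_cast hn
    refine ⟨Cs * ((n:ℝ) ^ p * ((n:ℝ) * Ck)), by positivity, fun φ hφ hφc hφs => ?_⟩
    set ψ : Fin n → EuclideanSpace ℝ (Fin n) → ℝ :=
      fun i x => fderiv ℝ φ x (EuclideanSpace.single i 1) with hψ_def
    have hφ' : ContDiff ℝ (⊤ : ℕ∞) (fderiv ℝ φ) := hφ.fderiv_right hle'
    have hψ_cd : ∀ i, ContDiff ℝ (⊤ : ℕ∞) (ψ i) := fun i =>
      hφ'.clm_apply contDiff_const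
    have hψ_cs : ∀ i, HasCompactSupport (ψ i) := fun i =>
      hφc.fderiv_apply ℝ (EuclideanSpace.single i 1)
    have hψ_supp : ∀ i, Function.support (ψ i) ⊆ tsupport φ := by
      intro i x hx
      apply support_fderiv_subset ℝ (f := φ)
      simp only [Function.mem_support] at hx ⊢
      intro h
      exact hx (by rw [hψ_def]; simp [h])
    have hψ_ts : ∀ i, tsupport (ψ i) ⊆ Ω := fun i =>
      (closure_minimal (hψ_supp i) (isClosed_tsupport φ)).trans hφs
    -- pointwise bound on iterated derivatives of components
    have hD : ∀ i, ∀ x, ‖iteratedFDeriv ℝ k (ψ i) x‖ ≤ ‖iteratedFDeriv ℝ (k+1) φ x‖ := by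
      intro i x
      have hcomp : ψ i = (ContinuousLinearMap.apply ℝ ℝ
          (EuclideanSpace.single i (1:ℝ))) ∘ fderiv ℝ φ := rfl
      have heq : iteratedFDeriv ℝ k (ψ i) x =
          (ContinuousLinearMap.apply ℝ ℝ
            (EuclideanSpace.single i (1:ℝ))).compContinuousMultilinearMap
            (iteratedFDeriv ℝ k (fderiv ℝ φ) x) := by
        rw [hcomp]
        exact ContinuousLinearMap.iteratedFDeriv_comp_left _ hφ'.contDiffAt (hle k)
      rw [heq]
      calc ‖(ContinuousLinearMap.apply ℝ ℝ
            (EuclideanSpace.single i (1:ℝ))).compContinuousMultilinearMap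
            (iteratedFDeriv ℝ k (fderiv ℝ φ) x)‖
          ≤ ‖ContinuousLinearMap.apply ℝ ℝ (EuclideanSpace.single i (1:ℝ))‖ *
            ‖iteratedFDeriv ℝ k (fderiv ℝ φ) x‖ :=
            ContinuousLinearMap.norm_compContinuousMultilinearMap_le _ _
        _ ≤ 1 * ‖iteratedFDeriv ℝ k (fderiv ℝ φ) x‖ := by
            refine mul_le_mul_of_nonneg_right ?_ (norm_nonneg _)
            refine ContinuousLinearMap.opNorm_le_bound _ one_pos.le fun L => ?_
            calc ‖(ContinuousLinearMap.apply ℝ ℝ (EuclideanSpace.single i (1:ℝ))) L‖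
                ≤ ‖L‖ * ‖EuclideanSpace.single i (1:ℝ)‖ := L.le_opNorm _
              _ = 1 * ‖L‖ := by rw [EuclideanSpace.norm_single]; simp [mul_comm]
        _ = ‖iteratedFDeriv ℝ (k+1) φ x‖ := by rw [one_mul, norm_iteratedFDeriv_fderiv]
    -- integrability facts
    have hρcont : ContinuousOn (fun x => infDist x (frontier Ω) ^ s) Ω :=
      (continuous_infDist_pt (frontier Ω)).continuousOn.rpow_const
        (fun x hx => Or.inl (hρpos x hx).ne')
    have hg1 : IntegrableOn (fun x => ‖iteratedFDeriv ℝ (k+1) φ x‖ ^ p) Ω := by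
      have hc : Continuous (fun x => ‖iteratedFDeriv ℝ (k+1) φ x‖ ^ p) :=
        (hφ.continuous_iteratedFDeriv (hle (k+1))).norm.rpow_const (fun x => Or.inr hp0.le)
      have hcs : HasCompactSupport (fun x => ‖iteratedFDeriv ℝ (k+1) φ x‖ ^ p) := by
        refine (hφc.iteratedFDeriv (k+1)).comp_left (g := fun y => ‖y‖ ^ p) ?_
        simp [Real.zero_rpow hp0.ne']
      exact (hc.integrable_of_hasCompactSupport hcs).integrableOn
    have hFi : ∀ i, IntegrableOn
        (fun x => |ψ i x| ^ p * infDist x (frontier Ω) ^ s) Ω := by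
      intro i
      refine aux_integrableOn Ω (tsupport φ) _ hφc hφs
        ((((hψ_cd i).continuous.abs.rpow_const
          (fun x => Or.inr hp0.le)).continuousOn).mul hρcont) ?_
      intro x hx
      have hz : ψ i x = 0 := by
        by_contra h
        exact hx (hψ_supp i (Function.mem_support.2 h))
      simp [hz, Real.zero_rpow hp0.ne']
    -- the main estimate for the gradient integral
    have hmain : ∫ x in Ω, ‖fderiv ℝ φ x‖ ^ p * infDist x (frontier Ω) ^ s ≤
        (n:ℝ) ^ p * ((n:ℝ) * Ck) * ∫ x in Ω, ‖iteratedFDeriv ℝ (k+1) φ x‖ ^ p := by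
      have step1 : ∫ x in Ω, ‖fderiv ℝ φ x‖ ^ p * infDist x (frontier Ω) ^ s ≤
          ∫ x in Ω, (n:ℝ) ^ p * ∑ i, |ψ i x| ^ p * infDist x (frontier Ω) ^ s := by
        refine integral_mono_of_nonneg
          (Filter.Eventually.of_forall fun x =>
            mul_nonneg (Real.rpow_nonneg (norm_nonneg _) _)
              (Real.rpow_nonneg infDist_nonneg _))
          ((integrable_finset_sum Finset.univ (fun i _ => hFi i)).const_mul ((n:ℝ)^p))
          (ae_restrict_of_forall_mem hΩo.measurableSet fun x hx => ?_)
        have hρs : (0:ℝ) ≤ infDist x (frontier Ω) ^ s := Real.rpow_nonneg infDist_nonneg s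
        have h1 : ‖fderiv ℝ φ x‖ ≤ ∑ i, |ψ i x| := aux_opnorm (fderiv ℝ φ x)
        have h2 : ‖fderiv ℝ φ x‖ ^ p ≤ (∑ i, |ψ i x|) ^ p :=
          Real.rpow_le_rpow (norm_nonneg _) h1 hp0.le
        have h3 : (∑ i, |ψ i x|) ^ p ≤ (n:ℝ) ^ p * ∑ i, |ψ i x| ^ p :=
          aux_sum_rpow hp1.le _ (fun i => abs_nonneg _)
        calc ‖fderiv ℝ φ x‖ ^ p * infDist x (frontier Ω) ^ s
            ≤ ((n:ℝ) ^ p * ∑ i, |ψ i x| ^ p) * infDist x (frontier Ω) ^ s :=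
              mul_le_mul_of_nonneg_right (h2.trans h3) hρs
          _ = (n:ℝ) ^ p * ∑ i, |ψ i x| ^ p * infDist x (frontier Ω) ^ s := by
              rw [mul_assoc, Finset.sum_mul]
      have step2 : ∫ x in Ω, (n:ℝ) ^ p * ∑ i, |ψ i x| ^ p * infDist x (frontier Ω) ^ s =
          (n:ℝ) ^ p * ∑ i, ∫ x in Ω, |ψ i x| ^ p * infDist x (frontier Ω) ^ s := by
        rw [integral_const_mul, integral_finset_sum Finset.univ (fun i _ => hFi i)]
      have step3 : ∀ i : Fin n, ∫ x in Ω, |ψ i x| ^ p * infDist x (frontier Ω) ^ s ≤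
          Ck * ∫ x in Ω, ‖iteratedFDeriv ℝ (k+1) φ x‖ ^ p := by
        intro i
        refine (hCk (ψ i) (hψ_cd i) (hψ_cs i) (hψ_ts i)).trans
          (mul_le_mul_of_nonneg_left ?_ hCk0.le)
        refine integral_mono_of_nonneg
          (Filter.Eventually.of_forall fun x => Real.rpow_nonneg (norm_nonneg _) _)
          hg1 (Filter.Eventually.of_forall fun x =>
            Real.rpow_le_rpow (norm_nonneg _) (hD i x) hp0.le)
      calc ∫ x in Ω, ‖fderiv ℝ φ x‖ ^ p * infDist x (frontier Ω) ^ s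
          ≤ (n:ℝ) ^ p * ∑ i, ∫ x in Ω, |ψ i x| ^ p * infDist x (frontier Ω) ^ s := by
            rw [← step2]; exact step1
        _ ≤ (n:ℝ) ^ p * ∑ _i : Fin n,
              (Ck * ∫ x in Ω, ‖iteratedFDeriv ℝ (k+1) φ x‖ ^ p) :=
            mul_le_mul_of_nonneg_left (Finset.sum_le_sum fun i _ => step3 i)
              (Real.rpow_nonneg hn0.le _)
        _ = (n:ℝ) ^ p * ((n:ℝ) * Ck) * ∫ x in Ω, ‖iteratedFDeriv ℝ (k+1) φ x‖ ^ p := by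
            rw [Finset.sum_const, Finset.card_univ, Fintype.card_fin, nsmul_eq_mul]
            ring
    have hexp : -(((k+1 : ℕ) : ℝ) * p) = s - p := by rw [hs_def]; push_cast; ring
    calc ∫ x in Ω, |φ x| ^ p * infDist x (frontier Ω) ^ (-(((k+1:ℕ):ℝ) * p))
        = ∫ x in Ω, |φ x| ^ p * infDist x (frontier Ω) ^ (s - p) := by rw [hexp]
      _ ≤ Cs * ∫ x in Ω, ‖fderiv ℝ φ x‖ ^ p * infDist x (frontier Ω) ^ s :=
          hCs φ hφ hφc hφs
      _ ≤ Cs * ((n:ℝ) ^ p * ((n:ℝ) * Ck) * ∫ x in Ω, ‖iteratedFDeriv ℝ (k+1) φ x‖ ^ p) :=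
          mul_le_mul_of_nonneg_left hmain hCs0.le
      _ = Cs * ((n:ℝ) ^ p * ((n:ℝ) * Ck)) * ∫ x in Ω, ‖iteratedFDeriv ℝ (k+1) φ x‖ ^ p := by
          ring

/-- Integer-order Hardy-type inequality: assuming the weighted Hardy inequality
for all exponents `s < p - 1`, one can bound the weighted `L^p` norm
`∫_Ω |φ|^p ρ^{-mp}` by the `L^p` norm of the `m`-th derivative, for all
test functions `φ ∈ C_c^∞(Ω)`. -/
theorem stmt_1 (n : ℕ) (hn : 1 ≤ n) (Ω : Set (EuclideanSpace ℝ (Fin n)))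
    (hΩo : IsOpen Ω) (hΩne : Ω.Nonempty) (hΩb : Bornology.IsBounded Ω)
    (p : ℝ) (hp1 : 1 < p) (m : ℕ) (hm : 1 ≤ m)
    (hHardy : ∀ s : ℝ, s < p - 1 → ∃ C : ℝ, 0 < C ∧
      ∀ φ : EuclideanSpace ℝ (Fin n) → ℝ, ContDiff ℝ (⊤ : ℕ∞) φ →
        HasCompactSupport φ → tsupport φ ⊆ Ω →
        ∫ x in Ω, |φ x| ^ p * infDist x (frontier Ω) ^ (s - p) ≤
          C * ∫ x in Ω, ‖fderiv ℝ φ x‖ ^ p * infDist x (frontier Ω) ^ s) :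
    ∃ C : ℝ, 0 < C ∧
      ∀ φ : EuclideanSpace ℝ (Fin n) → ℝ, ContDiff ℝ (⊤ : ℕ∞) φ →
        HasCompactSupport φ → tsupport φ ⊆ Ω →
        ∫ x in Ω, |φ x| ^ p * infDist x (frontier Ω) ^ (-((m : ℝ) * p)) ≤
          C * ∫ x in Ω, ‖iteratedFDeriv ℝ m φ x‖ ^ p :=
  hardy_iter n hn Ω hΩo hΩne hΩb p hp1 hHardy m
end

section
/- Let n ≥ 1, let Ω ⊂ ℝⁿ be a nonempty bounded open set, let m ≥ 1 be a natural number, let θ ∈ (1,2], let p̄ ∈ (2,∞], and define ϑ ∈ (1,∞) by 1/ϑ = 1/θ − 1/p̄. Let γ > 0 and C_γ > 0, and let w be a real-valued function that is continuous on the closure of Ω, differentiable on Ω, satisfies w(x) ≥ C_γ ρ(x)^γ for all x ∈ Ω, and whose gradient ∇w lies in L^{p̄}(Ω). Then there exists a constant C > 0, depending only on m, C_γ, ‖∇w‖_{L^{p̄}(Ω)}, the supremum of |w| over the closure of Ω, and the Lebesgue measure of Ω, such that for every φ ∈ C_c^∞(Ω) the function x ↦ w(x)^{−m} φ(x) on Ω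 satisfies ‖w^{−m}φ‖_{L^θ(Ω)} + ‖∇(w^{−m}φ)‖_{L^θ(Ω)} ≤ C ( ‖ρ^{−(m+1)γ} φ‖_{L^ϑ(Ω)} + ‖ρ^{−mγ} ∇φ‖_{L^θ(Ω)} ). -/
open MeasureTheory Metric ENNReal

/-- Embedding inequality for weighted Sobolev spaces with singular distance
weights: for a weight `w` continuous on `closure Ω`, differentiable on `Ω`,
bounded below by `C_γ ρ^γ`, with gradient in `L^p̄(Ω)`, the `W^{1,θ}`-norm of
`w^{-m} φ` is controlled by weighted norms of `φ` and `∇φ`, uniformly over all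
test functions `φ ∈ C_c^∞(Ω)`. -/
theorem stmt_3 (n : ℕ) (hn : 1 ≤ n) (Ω : Set (EuclideanSpace ℝ (Fin n)))
    (hΩo : IsOpen Ω) (hΩne : Ω.Nonempty) (hΩb : Bornology.IsBounded Ω)
    (m : ℕ) (hm : 1 ≤ m) (θ pbar ϑ : ℝ≥0∞)
    (hθ1 : 1 < θ) (hθ2 : θ ≤ 2) (hpbar : 2 < pbar)
    (hϑ : ϑ⁻¹ = θ⁻¹ - pbar⁻¹) (hϑ1 : 1 < ϑ) (hϑ2 : ϑ < ⊤)
    (γ Cγ : ℝ) (hγ : 0 < γ) (hCγ : 0 < Cγ)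
    (w : EuclideanSpace ℝ (Fin n) → ℝ)
    (hwc : ContinuousOn w (closure Ω)) (hwd : DifferentiableOn ℝ w Ω)
    (hwlow : ∀ x ∈ Ω, Cγ * infDist x (frontier Ω) ^ γ ≤ w x)
    (hgrad : eLpNorm (fun x => ‖fderiv ℝ w x‖) pbar (volume.restrict Ω) < ⊤) :
    ∃ C : ℝ, 0 < C ∧
      ∀ φ : EuclideanSpace ℝ (Fin n) → ℝ, ContDiff ℝ (⊤ : ℕ∞) φ →
        HasCompactSupport φ → tsupport φ ⊆ Ω →
        eLpNorm (fun x => φ x / w x ^ m) θ (volume.restrict Ω) +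
            eLpNorm (fun x => ‖fderiv ℝ (fun y => φ y / w y ^ m) x‖) θ
              (volume.restrict Ω) ≤
          ENNReal.ofReal C *
            (eLpNorm
                (fun x => infDist x (frontier Ω) ^ (-(((m : ℝ) + 1) * γ)) * φ x) ϑ
                (volume.restrict Ω) +
              eLpNorm
                (fun x => infDist x (frontier Ω) ^ (-((m : ℝ) * γ)) * ‖fderiv ℝ φ x‖) θ
                (volume.restrict Ω)) := by
  classical
  haveI : Nonempty (Fin n) := ⟨⟨0, hn⟩⟩
  set μ := volume.restrict Ω with hμdef
  have hfr : (frontier Ω).Nonempty := by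
    rw [Set.nonempty_iff_ne_empty]
    intro h
    rcases frontier_eq_empty_iff.mp h with h1 | h1
    · exact hΩne.ne_empty h1
    · exact NormedSpace.unbounded_univ ℝ _ (h1 ▸ hΩb)
  have hρpos : ∀ x ∈ Ω, 0 < infDist x (frontier Ω) := by
    intro x hx
    refine (isClosed_frontier.notMem_iff_infDist_pos hfr).mp ?_
    rw [hΩo.frontier_eq]
    exact fun h => h.2 hx
  have hρnonneg : ∀ x : EuclideanSpace ℝ (Fin n), 0 ≤ infDist x (frontier Ω) :=
    fun x => infDist_nonneg
  obtain ⟨y0, hy0⟩ := hfr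
  set K1 : ℝ := max (diam (closure Ω)) 1 with hK1def
  have hK1 : (1 : ℝ) ≤ K1 := le_max_right _ _
  have hK1pos : (0 : ℝ) < K1 := lt_of_lt_of_le one_pos hK1
  have hρle : ∀ x ∈ Ω, infDist x (frontier Ω) ≤ K1 := by
    intro x hx
    refine le_trans (infDist_le_dist_of_mem hy0) (le_trans ?_ (le_max_left _ _))
    exact dist_le_diam_of_mem hΩb.closure (subset_closure hx) (frontier_subset_closure hy0)
  have hwpos : ∀ x ∈ Ω, 0 < w x := fun x hx =>
    lt_of_lt_of_le (mul_pos hCγ (Real.rpow_pos_of_pos (hρpos x hx) γ)) (hwlow x hx)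
  have hwinv : ∀ k : ℕ, ∀ x ∈ Ω,
      (w x ^ k)⁻¹ ≤ Cγ⁻¹ ^ k * infDist x (frontier Ω) ^ (-((k : ℝ) * γ)) := by
    intro k x hx
    have hb : (0 : ℝ) < Cγ * infDist x (frontier Ω) ^ γ :=
      mul_pos hCγ (Real.rpow_pos_of_pos (hρpos x hx) γ)
    have h1 : (Cγ * infDist x (frontier Ω) ^ γ) ^ k ≤ w x ^ k :=
      pow_le_pow_left₀ hb.le (hwlow x hx) k
    have h2 : (w x ^ k)⁻¹ ≤ ((Cγ * infDist x (frontier Ω) ^ γ) ^ k)⁻¹ :=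
      inv_anti₀ (pow_pos hb k) h1
    refine h2.trans_eq ?_
    rw [mul_pow, mul_inv, ← inv_pow]
    congr 1
    rw [← Real.rpow_natCast (infDist x (frontier Ω) ^ γ) k,
      ← Real.rpow_mul (hρnonneg x), ← Real.rpow_neg (hρnonneg x), mul_comm γ (k : ℝ)]
  have hρswap : ∀ x ∈ Ω,
      infDist x (frontier Ω) ^ (-((m : ℝ) * γ)) ≤
        K1 ^ γ * infDist x (frontier Ω) ^ (-(((m : ℝ) + 1) * γ)) := by
    intro x hx
    have h1 : infDist x (frontier Ω) ^ (-((m : ℝ) * γ)) =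
        infDist x (frontier Ω) ^ γ * infDist x (frontier Ω) ^ (-(((m : ℝ) + 1) * γ)) := by
      rw [← Real.rpow_add (hρpos x hx)]
      ring_nf
    rw [h1]
    have h2 : infDist x (frontier Ω) ^ γ ≤ K1 ^ γ :=
      Real.rpow_le_rpow (hρnonneg x) (hρle x hx) hγ.le
    exact mul_le_mul_of_nonneg_right h2 (Real.rpow_nonneg (hρnonneg x) _)
  -- exponent bookkeeping
  have hθ0 : θ ≠ 0 := (lt_trans zero_lt_one hθ1).ne'
  have hθtop : θ ≠ ⊤ := (lt_of_le_of_lt hθ2 (by norm_num)).ne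
  have hpinv : pbar⁻¹ ≤ θ⁻¹ := ENNReal.inv_le_inv.mpr (hθ2.trans hpbar.le)
  have hsum : θ⁻¹ = ϑ⁻¹ + pbar⁻¹ := by
    rw [hϑ, tsub_add_cancel_of_le hpinv]
  have hθϑ : θ ≤ ϑ := ENNReal.inv_le_inv.mp (by rw [hϑ]; exact tsub_le_self)
  have hexp : 0 ≤ 1 / θ.toReal - 1 / ϑ.toReal := by
    have h1 : θ.toReal ≤ ϑ.toReal := ENNReal.toReal_mono hϑ2.ne hθϑ
    have h2 : 0 < θ.toReal := ENNReal.toReal_pos hθ0 hθtop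
    have h3 : 1 / ϑ.toReal ≤ 1 / θ.toReal := by
      rcases eq_or_lt_of_le h1 with h | h
      · rw [h]
      · exact le_of_lt (one_div_lt_one_div_of_lt h2 h)
    linarith
  set M : ℝ≥0∞ := volume Ω ^ (1 / θ.toReal - 1 / ϑ.toReal) with hMdef
  have hMfin : M ≠ ⊤ :=
    (ENNReal.rpow_lt_top_of_nonneg hexp hΩb.measure_lt_top.ne).ne
  set G := eLpNorm (fun x => ‖fderiv ℝ w x‖) pbar μ with hGdef
  set c0 : ℝ := Cγ⁻¹ ^ m * K1 ^ γ with hc0def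
  set c1 : ℝ := Cγ⁻¹ ^ m with hc1def
  set c2 : ℝ := m * Cγ⁻¹ ^ (m + 1) with hc2def
  have hc0 : 0 ≤ c0 := by positivity
  have hc1 : 0 ≤ c1 := by positivity
  have hc2 : 0 ≤ c2 := by positivity
  set Ctot : ℝ≥0∞ :=
    ENNReal.ofReal c0 * M + ENNReal.ofReal c1 + ENNReal.ofReal c2 * G with hCtotdef
  have hCtotfin : Ctot ≠ ⊤ :=
    ENNReal.add_ne_top.mpr
      ⟨ENNReal.add_ne_top.mpr
          ⟨ENNReal.mul_ne_top ENNReal.ofReal_ne_top hMfin, ENNReal.ofReal_ne_top⟩,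
        ENNReal.mul_ne_top ENNReal.ofReal_ne_top hgrad.ne⟩
  refine ⟨Ctot.toReal + 1, by positivity, ?_⟩
  intro φ hφc hφs hφΩ
  have hφcont : Continuous φ := hφc.continuous
  have hφ'cont : Continuous fun x => fderiv ℝ φ x := hφc.continuous_fderiv (by simp)
  set g1 : EuclideanSpace ℝ (Fin n) → ℝ :=
    fun x => infDist x (frontier Ω) ^ (-(((m : ℝ) + 1) * γ)) * φ x with hg1def
  set g2 : EuclideanSpace ℝ (Fin n) → ℝ :=
    fun x => infDist x (frontier Ω) ^ (-((m : ℝ) * γ)) * ‖fderiv ℝ φ x‖ with hg2def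
  have haux : ∀ a : ℝ, ContinuousOn (fun x => infDist x (frontier Ω) ^ a) Ω := fun a =>
    (continuous_infDist_pt (frontier Ω)).continuousOn.rpow_const
      (fun x hx => Or.inl (hρpos x hx).ne')
  have hg1m : AEStronglyMeasurable g1 μ :=
    ((haux _).mul hφcont.continuousOn).aestronglyMeasurable hΩo.measurableSet
  have hg2m : AEStronglyMeasurable g2 μ :=
    ((haux _).mul hφ'cont.norm.continuousOn).aestronglyMeasurable hΩo.measurableSet
  have hwgm : AEStronglyMeasurable (fun x => ‖fderiv ℝ w x‖) μ :=
    (measurable_fderiv ℝ w).norm.aestronglyMeasurable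
  have hg3m : AEStronglyMeasurable (fun x => ‖g1 x‖ * ‖fderiv ℝ w x‖) μ :=
    hg1m.norm.mul hwgm
  set R1 := eLpNorm g1 ϑ μ with hR1def
  set R2 := eLpNorm g2 θ μ with hR2def
  -- T0 bound
  have hT0 : eLpNorm (fun x => φ x / w x ^ m) θ μ ≤ ENNReal.ofReal c0 * eLpNorm g1 θ μ := by
    have hmono : eLpNorm (fun x => φ x / w x ^ m) θ μ ≤ eLpNorm (c0 • g1) θ μ := by
      refine eLpNorm_mono_ae ?_
      filter_upwards [self_mem_ae_restrict hΩo.measurableSet] with x hx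
      have hwx : 0 < w x ^ m := pow_pos (hwpos x hx) m
      have habs : ‖φ x / w x ^ m‖ = |φ x| * (w x ^ m)⁻¹ := by
        rw [Real.norm_eq_abs, abs_div, abs_of_pos hwx, div_eq_mul_inv]
      have h1 : |φ x| * (w x ^ m)⁻¹ ≤
          |φ x| * (c1 * infDist x (frontier Ω) ^ (-((m : ℝ) * γ))) :=
        mul_le_mul_of_nonneg_left (hwinv m x hx) (abs_nonneg _)
      have h2 : |φ x| * (c1 * infDist x (frontier Ω) ^ (-((m : ℝ) * γ))) ≤
          |φ x| * (c1 * (K1 ^ γ * infDist x (frontier Ω) ^ (-(((m : ℝ) + 1) * γ)))) := by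
        refine mul_le_mul_of_nonneg_left (mul_le_mul_of_nonneg_left (hρswap x hx) hc1)
          (abs_nonneg _)
      have h3 : |φ x| * (c1 * (K1 ^ γ * infDist x (frontier Ω) ^ (-(((m : ℝ) + 1) * γ))))
          = c0 * (infDist x (frontier Ω) ^ (-(((m : ℝ) + 1) * γ)) * |φ x|) := by
        rw [hc0def, hc1def]; ring
    -- conclude
      have h4 : ‖(c0 • g1) x‖ = c0 * (infDist x (frontier Ω) ^ (-(((m : ℝ) + 1) * γ)) * |φ x|) := by
        simp only [Pi.smul_apply, smul_eq_mul, hg1def, Real.norm_eq_abs, abs_mul,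
          abs_of_nonneg hc0, abs_of_nonneg (Real.rpow_nonneg (hρnonneg x) _)]
      rw [habs, h4]
      exact le_trans h1 (le_trans h2 (le_of_eq h3))
    refine hmono.trans ?_
    rw [eLpNorm_const_smul, Real.enorm_eq_ofReal hc0]
  have hg1cmp : eLpNorm g1 θ μ ≤ R1 * M := by
    have h := eLpNorm_le_eLpNorm_mul_rpow_measure_univ hθϑ hg1m
    rwa [hμdef, Measure.restrict_apply_univ] at h
  -- derivative bound
  have hf'bound : ∀ x ∈ Ω, ‖fderiv ℝ (fun y => φ y / w y ^ m) x‖ ≤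
      c1 * ‖g2 x‖ + c2 * (‖g1 x‖ * ‖fderiv ℝ w x‖) := by
    intro x hx
    have hwx : 0 < w x := hwpos x hx
    have hwmx : w x ^ m ≠ 0 := (pow_pos hwx m).ne'
    have hφd : HasFDerivAt φ (fderiv ℝ φ x) x := (hφc.differentiable (by simp) x).hasFDerivAt
    have hwdx : HasFDerivAt w (fderiv ℝ w x) x :=
      (hwd.differentiableAt (hΩo.mem_nhds hx)).hasFDerivAt
    have hinv : HasDerivAt (fun z : ℝ => (z ^ m)⁻¹)
        (-((m : ℝ) * w x ^ (m - 1)) / (w x ^ m) ^ 2) (w x) :=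
      (hasDerivAt_pow m (w x)).inv hwmx
    have hu : HasFDerivAt (fun y => (w y ^ m)⁻¹)
        ((-((m : ℝ) * w x ^ (m - 1)) / (w x ^ m) ^ 2) • fderiv ℝ w x) x :=
      hinv.comp_hasFDerivAt x hwdx
    have hmul : HasFDerivAt (fun y => φ y / w y ^ m)
        (φ x • ((-((m : ℝ) * w x ^ (m - 1)) / (w x ^ m) ^ 2) • fderiv ℝ w x) +
          (w x ^ m)⁻¹ • fderiv ℝ φ x) x := by
      have h2 : (fun y => φ y / w y ^ m) = fun y => φ y * (w y ^ m)⁻¹ := by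
        funext y; rw [div_eq_mul_inv]
      rw [h2]
      exact hφd.mul hu
    rw [hmul.fderiv]
    have hd_eq : |(-((m : ℝ) * w x ^ (m - 1)) / (w x ^ m) ^ 2)| = (m : ℝ) * (w x ^ (m + 1))⁻¹ := by
      have hsq : (w x ^ m) ^ 2 = w x ^ (m - 1) * w x ^ (m + 1) := by
        rw [← pow_mul, ← pow_add]
        congr 1
        omega
      rw [abs_div, abs_neg, abs_of_nonneg (by positivity), abs_of_nonneg (by positivity), hsq]
      rw [mul_div_assoc]
      congr 1
      rw [div_eq_iff (by positivity)]
      field_simp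
    have hd_le : |(-((m : ℝ) * w x ^ (m - 1)) / (w x ^ m) ^ 2)| ≤
        (m : ℝ) * (Cγ⁻¹ ^ (m + 1) * infDist x (frontier Ω) ^ (-(((m : ℝ) + 1) * γ))) := by
      rw [hd_eq]
      refine mul_le_mul_of_nonneg_left ?_ (Nat.cast_nonneg m)
      have := hwinv (m + 1) x hx
      rwa [Nat.cast_add, Nat.cast_one] at this
    have hn1 : ‖(w x ^ m)⁻¹ • fderiv ℝ φ x‖ ≤ c1 * ‖g2 x‖ := by
      rw [norm_smul, Real.norm_eq_abs, abs_of_pos (inv_pos.mpr (pow_pos hwx m))]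
      have h1 : (w x ^ m)⁻¹ * ‖fderiv ℝ φ x‖ ≤
          (c1 * infDist x (frontier Ω) ^ (-((m : ℝ) * γ))) * ‖fderiv ℝ φ x‖ :=
        mul_le_mul_of_nonneg_right (hwinv m x hx) (norm_nonneg _)
      refine h1.trans (le_of_eq ?_)
      rw [hg2def, Real.norm_eq_abs, abs_mul,
        abs_of_nonneg (Real.rpow_nonneg (hρnonneg x) _), abs_of_nonneg (norm_nonneg _)]
      ring
    have hn2 : ‖φ x • ((-((m : ℝ) * w x ^ (m - 1)) / (w x ^ m) ^ 2) • fderiv ℝ w x)‖ ≤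
        c2 * (‖g1 x‖ * ‖fderiv ℝ w x‖) := by
      rw [norm_smul, norm_smul, Real.norm_eq_abs, Real.norm_eq_abs]
      have h1 : |φ x| * (|(-((m : ℝ) * w x ^ (m - 1)) / (w x ^ m) ^ 2)| * ‖fderiv ℝ w x‖) ≤
          |φ x| * (((m : ℝ) * (Cγ⁻¹ ^ (m + 1) *
            infDist x (frontier Ω) ^ (-(((m : ℝ) + 1) * γ)))) * ‖fderiv ℝ w x‖) :=
        mul_le_mul_of_nonneg_left (mul_le_mul_of_nonneg_right hd_le (norm_nonneg _))
          (abs_nonneg _)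
      refine h1.trans (le_of_eq ?_)
      rw [hg1def, hc2def, Real.norm_eq_abs, abs_mul,
        abs_of_nonneg (Real.rpow_nonneg (hρnonneg x) _)]
      ring
    calc ‖φ x • ((-((m : ℝ) * w x ^ (m - 1)) / (w x ^ m) ^ 2) • fderiv ℝ w x) +
          (w x ^ m)⁻¹ • fderiv ℝ φ x‖
        ≤ ‖φ x • ((-((m : ℝ) * w x ^ (m - 1)) / (w x ^ m) ^ 2) • fderiv ℝ w x)‖ +
          ‖(w x ^ m)⁻¹ • fderiv ℝ φ x‖ := norm_add_le _ _
      _ ≤ c2 * (‖g1 x‖ * ‖fderiv ℝ w x‖) + c1 * ‖g2 x‖ := add_le_add hn2 hn1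
      _ = c1 * ‖g2 x‖ + c2 * (‖g1 x‖ * ‖fderiv ℝ w x‖) := by ring
  -- T1 bound
  have hT1 : eLpNorm (fun x => ‖fderiv ℝ (fun y => φ y / w y ^ m) x‖) θ μ ≤
      ENNReal.ofReal c1 * R2 + ENNReal.ofReal c2 * (R1 * G) := by
    have hstep1 : eLpNorm (fun x => ‖fderiv ℝ (fun y => φ y / w y ^ m) x‖) θ μ ≤
        eLpNorm ((c1 • fun x => ‖g2 x‖) + (c2 • fun x => ‖g1 x‖ * ‖fderiv ℝ w x‖)) θ μ := by
      refine eLpNorm_mono_ae ?_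
      filter_upwards [self_mem_ae_restrict hΩo.measurableSet] with x hx
      rw [norm_norm]
      refine (hf'bound x hx).trans ?_
      simp only [Pi.add_apply, Pi.smul_apply, smul_eq_mul]
      exact (le_abs_self _).trans_eq (Real.norm_eq_abs _).symm
    refine hstep1.trans ?_
    have hstep2 := eLpNorm_add_le ((hg2m.norm).const_smul c1) (hg3m.const_smul c2) hθ1.le
    refine hstep2.trans ?_
    rw [eLpNorm_const_smul, eLpNorm_const_smul, Real.enorm_eq_ofReal hc1,
      Real.enorm_eq_ofReal hc2, eLpNorm_norm]
    refine add_le_add_right (mul_le_mul_of_nonneg_left ?_ (zero_le : (0 : ℝ≥0∞) ≤ _)) _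
    have hH : eLpNorm ((fun x => ‖g1 x‖) • fun x => ‖fderiv ℝ w x‖) θ μ ≤
        eLpNorm (fun x => ‖g1 x‖) ϑ μ * eLpNorm (fun x => ‖fderiv ℝ w x‖) pbar μ :=
      eLpNorm_smul_le_mul_eLpNorm hwgm hg1m.norm
        (hpqr := ⟨hsum.symm⟩)
    have heq : ((fun x => ‖g1 x‖) • fun x => ‖fderiv ℝ w x‖) =
        fun x => ‖g1 x‖ * ‖fderiv ℝ w x‖ := rfl
    rw [heq] at hH
    refine hH.trans (le_of_eq ?_)
    rw [eLpNorm_norm]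
  -- assemble
  calc eLpNorm (fun x => φ x / w x ^ m) θ μ +
        eLpNorm (fun x => ‖fderiv ℝ (fun y => φ y / w y ^ m) x‖) θ μ
      ≤ ENNReal.ofReal c0 * (R1 * M) +
        (ENNReal.ofReal c1 * R2 + ENNReal.ofReal c2 * (R1 * G)) := by
        refine add_le_add (hT0.trans ?_) hT1
        exact mul_le_mul_right hg1cmp _
    _ ≤ ENNReal.ofReal c0 * M * (R1 + R2) + (ENNReal.ofReal c1 * (R1 + R2) +
        ENNReal.ofReal c2 * G * (R1 + R2)) := by
        refine add_le_add ?_ (add_le_add ?_ ?_)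
        · calc ENNReal.ofReal c0 * (R1 * M) = ENNReal.ofReal c0 * M * R1 := by ring
            _ ≤ ENNReal.ofReal c0 * M * (R1 + R2) := mul_le_mul_right le_self_add _
        · exact mul_le_mul_right le_add_self _
        · calc ENNReal.ofReal c2 * (R1 * G) = ENNReal.ofReal c2 * G * R1 := by ring
            _ ≤ ENNReal.ofReal c2 * G * (R1 + R2) := mul_le_mul_right le_self_add _
    _ = Ctot * (R1 + R2) := by rw [hCtotdef]; ring
    _ ≤ ENNReal.ofReal (Ctot.toReal + 1) * (R1 + R2) := by
        have h : ENNReal.ofReal (Ctot.toReal + 1) = Ctot + 1 := by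
          rw [ENNReal.ofReal_add ENNReal.toReal_nonneg zero_le_one,
            ENNReal.ofReal_toReal hCtotfin, ENNReal.ofReal_one]
        rw [h]
        exact mul_le_mul_left le_self_add _
end

section
/- Let n ≥ 1, let Ω ⊂ ℝⁿ be a nonempty bounded open set, and let m be an odd natural number. Let σ : Ω → ℝ^{n×n} be measurable with |σ_{ij}(x)| ≤ Λ for a.e. x ∈ Ω and all i,j, let f ∈ L¹(Ω), let q, q† : Ω → ℝ be measurable with 0 ≤ q(x) ≤ q̄ a.e. and q† bounded, and let p ∈ [2,∞) with conjugate exponent p' = p/(p−1). Let u, u† : ℝⁿ → ℝ be continuously differentiable with sup_Ω |u| ≤ C_A and sup_Ω |u†| ≤ C_A and with gradients bounded on Ω, and assume the weak formulations ∫_Ω σ∇u·∇v dx + ∫_Ω q u^m v dx = ∫_Ω f v dx and ∫_Ω σ∇u†·∇v dx + ∫_Ω q† (u†)^m v dx = ∫_Ω f v dx hold for every continuously differentiable v with compact support contained in Ω. Then for every such v: |∫_Ω (q† − q)(u†)^m v dx| ≤ (nΛ + m q̄ C_A^{m−1}) · ( ‖u−u†‖_{L^p(Ω)} + ‖∇(u−u†)‖_{L^p(Ω)}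 ) · ( ‖v‖_{L^{p'}(Ω)} + ‖∇v‖_{L^{p'}(Ω)} ). -/
open MeasureTheory Metric Finset

lemma euc_sum_abs_le (n : ℕ) (w : EuclideanSpace ℝ (Fin n)) :
    ∑ j, |w j| ≤ Real.sqrt n * ‖w‖ := by
  have h1 : (∑ j, |w j|) ^ 2 ≤ (n : ℝ) * ∑ j, |w j| ^ 2 := by
    simpa using sq_sum_le_card_mul_sum_sq (s := Finset.univ) (f := fun j => |w j|)
  have h2 : ‖w‖ ^ 2 = ∑ j, |w j| ^ 2 := by
    rw [EuclideanSpace.norm_eq]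
    rw [Real.sq_sqrt (by positivity)]
    simp [Real.norm_eq_abs]
  have h3 : (∑ j, |w j|) ^ 2 ≤ (Real.sqrt n * ‖w‖) ^ 2 := by
    rw [mul_pow, Real.sq_sqrt (by positivity)]
    rw [h2]; exact h1
  have h4 : (0:ℝ) ≤ ∑ j, |w j| := Finset.sum_nonneg fun j _ => abs_nonneg _
  nlinarith [Real.sqrt_nonneg (n:ℝ), norm_nonneg w, mul_nonneg (Real.sqrt_nonneg (n:ℝ)) (norm_nonneg w)]

lemma clm_sum_abs_le (n : ℕ) (L : EuclideanSpace ℝ (Fin n) →L[ℝ] ℝ) :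
    ∑ j, |L (EuclideanSpace.single j 1)| ≤ Real.sqrt n * ‖L‖ := by
  obtain ⟨w, hw, hwn⟩ : ∃ w : EuclideanSpace ℝ (Fin n), (∀ x, L x = @inner ℝ _ _ w x) ∧ ‖w‖ = ‖L‖ := by
    refine ⟨(InnerProductSpace.toDual ℝ _).symm L, fun x => ?_, ?_⟩
    · rw [InnerProductSpace.toDual_symm_apply]
    · exact (LinearIsometryEquiv.norm_map _ _)
  calc ∑ j, |L (EuclideanSpace.single j 1)| = ∑ j, |w j| := by
        refine Finset.sum_congr rfl fun j _ => ?_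
        rw [hw, EuclideanSpace.inner_single_right]
        simp
    _ ≤ Real.sqrt n * ‖w‖ := euc_sum_abs_le n w
    _ = Real.sqrt n * ‖L‖ := by rw [hwn]

lemma pow_sub_pow_abs_le {a b CA : ℝ} (m : ℕ) (hm : 1 ≤ m) (ha : |a| ≤ CA) (hb : |b| ≤ CA) :
    |a ^ m - b ^ m| ≤ (m : ℝ) * CA ^ (m - 1) * |a - b| := by
  have hCA : 0 ≤ CA := le_trans (abs_nonneg a) ha
  rw [← geom_sum₂_mul a b m, abs_mul]
  refine mul_le_mul_of_nonneg_right ?_ (abs_nonneg _)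
  calc |∑ i ∈ Finset.range m, a ^ i * b ^ (m - 1 - i)| ≤
      ∑ i ∈ Finset.range m, |a ^ i * b ^ (m - 1 - i)| := Finset.abs_sum_le_sum_abs _ _
    _ ≤ ∑ _i ∈ Finset.range m, CA ^ (m - 1) := by
        refine Finset.sum_le_sum fun i hi => ?_
        rw [abs_mul, abs_pow, abs_pow]
        have him := Finset.mem_range.mp hi
        have hi' : i ≤ m - 1 := by omega
        calc |a| ^ i * |b| ^ (m - 1 - i) ≤ CA ^ i * CA ^ (m - 1 - i) := by
              gcongr
          _ = CA ^ (m - 1) := by rw [← pow_add]; congr 1; omega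
    _ = (m : ℝ) * CA ^ (m - 1) := by simp [Finset.sum_const, mul_comm]

lemma abs_int_le {α : Type*} [MeasurableSpace α] (μ : MeasureTheory.Measure α) (f : α → ℝ) :
    |∫ x, f x ∂μ| ≤ ∫ x, |f x| ∂μ := by
  simpa [Real.norm_eq_abs] using MeasureTheory.norm_integral_le_integral_norm (μ := μ) f

set_option maxHeartbeats 1000000 in
/-- Core estimate of the conditional stability theorem: the duality pairing of
`(q† - q)(u†)^m` against a test function `v` is bounded by
`(nΛ + m q̄ C_A^{m-1}) ‖u - u†‖_{W^{1,p}(Ω)} ‖v‖_{W^{1,p'}(Ω)}`. -/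
theorem stmt_8 (n : ℕ) (hn : 1 ≤ n) (Ω : Set (EuclideanSpace ℝ (Fin n)))
    (hΩo : IsOpen Ω) (hΩne : Ω.Nonempty) (hΩb : Bornology.IsBounded Ω)
    (m l : ℕ) (hm : m = 2 * l + 1)
    (σ : EuclideanSpace ℝ (Fin n) → Matrix (Fin n) (Fin n) ℝ)
    (hσmeas : ∀ i j, Measurable fun x => σ x i j)
    (Λ : ℝ) (hσbd : ∀ᵐ x ∂(volume.restrict Ω), ∀ i j, |σ x i j| ≤ Λ)
    (f : EuclideanSpace ℝ (Fin n) → ℝ) (hf : IntegrableOn f Ω)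
    (q qdag : EuclideanSpace ℝ (Fin n) → ℝ)
    (hqmeas : Measurable q) (hqdagmeas : Measurable qdag)
    (qbar : ℝ) (hq : ∀ᵐ x ∂(volume.restrict Ω), 0 ≤ q x ∧ q x ≤ qbar)
    (Mdag : ℝ) (hqdagbd : ∀ x ∈ Ω, |qdag x| ≤ Mdag)
    (p p' : ℝ) (hp : 2 ≤ p) (hp' : p' = p / (p - 1))
    (u udag : EuclideanSpace ℝ (Fin n) → ℝ)
    (hu : ContDiff ℝ 1 u) (hudag : ContDiff ℝ 1 udag)
    (CA : ℝ) (hub : ∀ x ∈ Ω, |u x| ≤ CA) (hudagb : ∀ x ∈ Ω, |udag x| ≤ CA)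
    (Mg : ℝ) (hgb : ∀ x ∈ Ω, ‖fderiv ℝ u x‖ ≤ Mg)
    (hgdagb : ∀ x ∈ Ω, ‖fderiv ℝ udag x‖ ≤ Mg)
    (hweak : ∀ v : EuclideanSpace ℝ (Fin n) → ℝ, ContDiff ℝ 1 v →
      HasCompactSupport v → tsupport v ⊆ Ω →
      (∫ x in Ω, ∑ i, ∑ j, σ x i j * fderiv ℝ u x (EuclideanSpace.single j 1) *
          fderiv ℝ v x (EuclideanSpace.single i 1)) +
        ∫ x in Ω, q x * u x ^ m * v x = ∫ x in Ω, f x * v x)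
    (hweakdag : ∀ v : EuclideanSpace ℝ (Fin n) → ℝ, ContDiff ℝ 1 v →
      HasCompactSupport v → tsupport v ⊆ Ω →
      (∫ x in Ω, ∑ i, ∑ j, σ x i j * fderiv ℝ udag x (EuclideanSpace.single j 1) *
          fderiv ℝ v x (EuclideanSpace.single i 1)) +
        ∫ x in Ω, qdag x * udag x ^ m * v x = ∫ x in Ω, f x * v x) :
    ∀ v : EuclideanSpace ℝ (Fin n) → ℝ, ContDiff ℝ 1 v →
      HasCompactSupport v → tsupport v ⊆ Ω →
      |∫ x in Ω, (qdag x - q x) * udag x ^ m * v x| ≤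
        ((n : ℝ) * Λ + (m : ℝ) * qbar * CA ^ (m - 1)) *
          ((∫ x in Ω, |u x - udag x| ^ p) ^ (1 / p) +
            (∫ x in Ω, ‖fderiv ℝ u x - fderiv ℝ udag x‖ ^ p) ^ (1 / p)) *
          ((∫ x in Ω, |v x| ^ p') ^ (1 / p') +
            (∫ x in Ω, ‖fderiv ℝ v x‖ ^ p') ^ (1 / p')) := by
  intro v hv hvc hvs
  have hΩm : MeasurableSet Ω := hΩo.measurableSet
  set μ := volume.restrict Ω with hμdef
  haveI : IsFiniteMeasure μ := ⟨by
    rw [hμdef, Measure.restrict_apply_univ]; exact hΩb.measure_lt_top⟩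
  have hmem : ∀ᵐ x ∂μ, x ∈ Ω := ae_restrict_mem hΩm
  have hμne : μ ≠ 0 := by
    intro h
    have h2 : μ Ω = 0 := by rw [h]; rfl
    rw [hμdef, Measure.restrict_apply hΩm, Set.inter_self] at h2
    exact (hΩo.measure_pos volume hΩne).ne' h2
  haveI : (ae μ).NeBot := ae_neBot.mpr hμne
  -- basic nonnegativity facts
  have hΛ0 : 0 ≤ Λ := by
    obtain ⟨x, hx⟩ := hσbd.exists
    exact le_trans (abs_nonneg _) (hx ⟨0, hn⟩ ⟨0, hn⟩)
  have hqbar0 : 0 ≤ qbar := by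
    obtain ⟨x, hx⟩ := hq.exists; linarith [hx.1, hx.2]
  obtain ⟨x₀, hx₀⟩ := hΩne
  have hCA0 : 0 ≤ CA := le_trans (abs_nonneg _) (hub x₀ hx₀)
  have hMg0 : 0 ≤ Mg := le_trans (norm_nonneg _) (hgb x₀ hx₀)
  have hm1 : 1 ≤ m := by omega
  have hp1 : 1 < p := by linarith
  have hpq : p.HolderConjugate p' := (Real.holderConjugate_iff_eq_conjExponent hp1).mpr hp'
  -- continuity of derivatives
  have hDu : Continuous (fderiv ℝ u) := hu.continuous_fderiv one_ne_zero
  have hDud : Continuous (fderiv ℝ udag) := hudag.continuous_fderiv one_ne_zero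
  have hDv : Continuous (fderiv ℝ v) := hv.continuous_fderiv one_ne_zero
  obtain ⟨Cv, hCv⟩ := hvc.exists_bound_of_continuous hv.continuous
  obtain ⟨Mv, hMv⟩ := (hvc.fderiv ℝ).exists_bound_of_continuous hDv
  have hMv0 : 0 ≤ Mv := le_trans (norm_nonneg _) (hMv x₀)
  have hCv0 : 0 ≤ Cv := le_trans (norm_nonneg _) (hCv x₀)
  have happ : ∀ (L : EuclideanSpace ℝ (Fin n) →L[ℝ] ℝ) (j : Fin n),
      |L (EuclideanSpace.single j 1)| ≤ ‖L‖ := by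
    intro L j
    have h := L.le_opNorm (EuclideanSpace.single j 1)
    simpa [EuclideanSpace.norm_single] using h
  -- generic integrability of bounded a.e.-measurable functions
  have intOfBound : ∀ (g : EuclideanSpace ℝ (Fin n) → ℝ) (C : ℝ),
      AEStronglyMeasurable g μ → (∀ᵐ x ∂μ, ‖g x‖ ≤ C) → Integrable g μ := by
    intro g C hmeas hb
    exact (integrable_const C).mono' hmeas hb
  -- integrability of the sigma integrands
  have intσ : ∀ (g : EuclideanSpace ℝ (Fin n) → ℝ), Continuous (fderiv ℝ g) →
      (∀ x ∈ Ω, ‖fderiv ℝ g x‖ ≤ Mg) →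
      Integrable (fun x => ∑ i, ∑ j, σ x i j * fderiv ℝ g x (EuclideanSpace.single j 1) *
        fderiv ℝ v x (EuclideanSpace.single i 1)) μ := by
    intro g hDg hgbd
    refine intOfBound _ ((n:ℝ) * ((n:ℝ) * (Λ * Mg * Mv))) ?_ ?_
    · refine Measurable.aestronglyMeasurable ?_
      refine Finset.measurable_sum _ fun i _ => Finset.measurable_sum _ fun j _ => ?_
      exact ((hσmeas i j).mul
        (hDg.clm_apply continuous_const).measurable).mul
        (hDv.clm_apply continuous_const).measurable
    · filter_upwards [hσbd, hmem] with x hσx hxΩ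
      rw [Real.norm_eq_abs]
      calc |∑ i, ∑ j, σ x i j * fderiv ℝ g x (EuclideanSpace.single j 1) *
              fderiv ℝ v x (EuclideanSpace.single i 1)|
          ≤ ∑ i, |∑ j, σ x i j * fderiv ℝ g x (EuclideanSpace.single j 1) *
              fderiv ℝ v x (EuclideanSpace.single i 1)| := Finset.abs_sum_le_sum_abs _ _
        _ ≤ ∑ i : Fin n, ∑ j : Fin n, |σ x i j * fderiv ℝ g x (EuclideanSpace.single j 1) *
              fderiv ℝ v x (EuclideanSpace.single i 1)| :=
            Finset.sum_le_sum fun i _ => Finset.abs_sum_le_sum_abs _ _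
        _ ≤ ∑ _i : Fin n, ∑ _j : Fin n, Λ * Mg * Mv := by
            refine Finset.sum_le_sum fun i _ => Finset.sum_le_sum fun j _ => ?_
            rw [abs_mul, abs_mul]
            exact mul_le_mul
              (mul_le_mul (hσx i j) ((happ _ j).trans (hgbd x hxΩ)) (abs_nonneg _) hΛ0)
              ((happ _ i).trans (hMv x)) (abs_nonneg _) (mul_nonneg hΛ0 hMg0)
        _ = (n:ℝ) * ((n:ℝ) * (Λ * Mg * Mv)) := by
            simp [Finset.sum_const, mul_assoc]
  have I_σu := intσ u hDu hgb
  have I_σd := intσ udag hDud hgdagb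
  -- integrability of the potential-term integrands
  have intq : ∀ (Q g : EuclideanSpace ℝ (Fin n) → ℝ) (MQ : ℝ), Measurable Q →
      (∀ᵐ x ∂μ, |Q x| ≤ MQ) → Continuous g → (∀ x ∈ Ω, |g x| ≤ CA) →
      Integrable (fun x => Q x * g x ^ m * v x) μ := by
    intro Q g MQ hQm hQb hgc hgbd
    have hMQ0 : 0 ≤ MQ := by
      obtain ⟨x, hx⟩ := hQb.exists; exact le_trans (abs_nonneg _) hx
    refine intOfBound _ (MQ * CA ^ m * Cv) ?_ ?_
    · exact ((hQm.mul ((hgc.pow m).measurable)).mul hv.continuous.measurable).aestronglyMeasurable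
    · filter_upwards [hQb, hmem] with x hQx hxΩ
      rw [Real.norm_eq_abs, abs_mul, abs_mul, abs_pow]
      exact mul_le_mul
        (mul_le_mul hQx (pow_le_pow_left₀ (abs_nonneg _) (hgbd x hxΩ) m)
          (pow_nonneg (abs_nonneg _) m) hMQ0)
        (hCv x) (abs_nonneg _) (mul_nonneg hMQ0 (pow_nonneg hCA0 m))
  have hqb' : ∀ᵐ x ∂μ, |q x| ≤ qbar := by
    filter_upwards [hq] with x hx; rw [abs_of_nonneg hx.1]; exact hx.2
  have hqdb' : ∀ᵐ x ∂μ, |qdag x| ≤ Mdag := by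
    filter_upwards [hmem] with x hx; exact hqdagbd x hx
  have I_qu := intq q u qbar hqmeas hqb' hu.continuous hub
  have I_qd := intq q udag qbar hqmeas hqb' hudag.continuous hudagb
  have I_qdd := intq qdag udag Mdag hqdagmeas hqdb' hudag.continuous hudagb
  -- key identity
  have hsub1 : ∫ x in Ω, (qdag x - q x) * udag x ^ m * v x
      = (∫ x in Ω, qdag x * udag x ^ m * v x) - ∫ x in Ω, q x * udag x ^ m * v x := by
    rw [← integral_sub I_qdd I_qd]
    exact integral_congr_ae (Filter.Eventually.of_forall fun x => by ring)
  have hsub2 : ∫ x in Ω, q x * (u x ^ m - udag x ^ m) * v x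
      = (∫ x in Ω, q x * u x ^ m * v x) - ∫ x in Ω, q x * udag x ^ m * v x := by
    rw [← integral_sub I_qu I_qd]
    exact integral_congr_ae (Filter.Eventually.of_forall fun x => by ring)
  have hsub3 : ∫ x in Ω, ∑ i, ∑ j, σ x i j *
        (fderiv ℝ u x (EuclideanSpace.single j 1) - fderiv ℝ udag x (EuclideanSpace.single j 1)) *
        fderiv ℝ v x (EuclideanSpace.single i 1)
      = (∫ x in Ω, ∑ i, ∑ j, σ x i j * fderiv ℝ u x (EuclideanSpace.single j 1) *
          fderiv ℝ v x (EuclideanSpace.single i 1)) -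
        ∫ x in Ω, ∑ i, ∑ j, σ x i j * fderiv ℝ udag x (EuclideanSpace.single j 1) *
          fderiv ℝ v x (EuclideanSpace.single i 1) := by
    rw [← integral_sub I_σu I_σd]
    refine integral_congr_ae (Filter.Eventually.of_forall fun x => ?_)
    dsimp only
    rw [← Finset.sum_sub_distrib]
    refine Finset.sum_congr rfl fun i _ => ?_
    rw [← Finset.sum_sub_distrib]
    exact Finset.sum_congr rfl fun j _ => by ring
  have e1 := hweak v hv hvc hvs
  have e2 := hweakdag v hv hvc hvs
  have hkey : ∫ x in Ω, (qdag x - q x) * udag x ^ m * v x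
      = (∫ x in Ω, ∑ i, ∑ j, σ x i j *
          (fderiv ℝ u x (EuclideanSpace.single j 1) - fderiv ℝ udag x (EuclideanSpace.single j 1)) *
          fderiv ℝ v x (EuclideanSpace.single i 1))
        + ∫ x in Ω, q x * (u x ^ m - udag x ^ m) * v x := by
    rw [hsub1, hsub2, hsub3]; linarith
  -- MemLp facts for Hölder
  have memw : MemLp (fun x => u x - udag x) (ENNReal.ofReal p) μ := by
    refine MemLp.of_bound (hu.continuous.sub hudag.continuous).aestronglyMeasurable (2 * CA) ?_
    filter_upwards [hmem] with x hx
    rw [Real.norm_eq_abs]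
    calc |u x - udag x| ≤ |u x| + |udag x| := abs_sub _ _
      _ ≤ 2 * CA := by linarith [hub x hx, hudagb x hx]
  have memDw : MemLp (fun x => fderiv ℝ u x - fderiv ℝ udag x) (ENNReal.ofReal p) μ := by
    refine MemLp.of_bound (hDu.sub hDud).aestronglyMeasurable (2 * Mg) ?_
    filter_upwards [hmem] with x hx
    calc ‖fderiv ℝ u x - fderiv ℝ udag x‖ ≤ ‖fderiv ℝ u x‖ + ‖fderiv ℝ udag x‖ := norm_sub_le _ _
      _ ≤ 2 * Mg := by linarith [hgb x hx, hgdagb x hx]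
  have memv : MemLp v (ENNReal.ofReal p') μ :=
    MemLp.of_bound hv.continuous.aestronglyMeasurable Cv
      (Filter.Eventually.of_forall fun x => hCv x)
  have memDv : MemLp (fderiv ℝ v) (ENNReal.ofReal p') μ :=
    MemLp.of_bound hDv.aestronglyMeasurable Mv (Filter.Eventually.of_forall fun x => hMv x)
  -- Hölder
  have hH1 : ∫ x in Ω, ‖fderiv ℝ u x - fderiv ℝ udag x‖ * ‖fderiv ℝ v x‖
      ≤ (∫ x in Ω, ‖fderiv ℝ u x - fderiv ℝ udag x‖ ^ p) ^ (1 / p) *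
        (∫ x in Ω, ‖fderiv ℝ v x‖ ^ p') ^ (1 / p') :=
    integral_mul_norm_le_Lp_mul_Lq hpq memDw memDv
  have hH2 : ∫ x in Ω, |u x - udag x| * |v x|
      ≤ (∫ x in Ω, |u x - udag x| ^ p) ^ (1 / p) * (∫ x in Ω, |v x| ^ p') ^ (1 / p') := by
    have h := integral_mul_norm_le_Lp_mul_Lq hpq memw memv
    simpa [Real.norm_eq_abs] using h
  -- pointwise bounds
  have hnn : Real.sqrt n * Real.sqrt n = (n:ℝ) := Real.mul_self_sqrt (by positivity)
  have hbd1 : ∀ᵐ x ∂μ, |∑ i, ∑ j, σ x i j *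
        (fderiv ℝ u x (EuclideanSpace.single j 1) - fderiv ℝ udag x (EuclideanSpace.single j 1)) *
        fderiv ℝ v x (EuclideanSpace.single i 1)|
      ≤ (n:ℝ) * Λ * (‖fderiv ℝ u x - fderiv ℝ udag x‖ * ‖fderiv ℝ v x‖) := by
    filter_upwards [hσbd] with x hσx
    simp only [← ContinuousLinearMap.sub_apply]
    set L := fderiv ℝ u x - fderiv ℝ udag x with hL
    set K := fderiv ℝ v x with hK
    calc |∑ i, ∑ j, σ x i j * L (EuclideanSpace.single j 1) * K (EuclideanSpace.single i 1)|
        ≤ ∑ i, |∑ j, σ x i j * L (EuclideanSpace.single j 1) * K (EuclideanSpace.single i 1)| :=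
          Finset.abs_sum_le_sum_abs _ _
      _ ≤ ∑ i : Fin n, ∑ j : Fin n,
            |σ x i j * L (EuclideanSpace.single j 1) * K (EuclideanSpace.single i 1)| :=
          Finset.sum_le_sum fun i _ => Finset.abs_sum_le_sum_abs _ _
      _ ≤ ∑ i : Fin n, ∑ j : Fin n,
            Λ * (|L (EuclideanSpace.single j 1)| * |K (EuclideanSpace.single i 1)|) := by
          refine Finset.sum_le_sum fun i _ => Finset.sum_le_sum fun j _ => ?_
          rw [abs_mul, abs_mul, mul_assoc]
          exact mul_le_mul_of_nonneg_right (hσx i j)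
            (mul_nonneg (abs_nonneg _) (abs_nonneg _))
      _ = Λ * ((∑ j : Fin n, |L (EuclideanSpace.single j 1)|) *
            (∑ i : Fin n, |K (EuclideanSpace.single i 1)|)) := by
          rw [Finset.sum_mul_sum, Finset.mul_sum]
          rw [Finset.sum_comm]
          refine Finset.sum_congr rfl fun i _ => ?_
          rw [Finset.mul_sum]
      _ ≤ Λ * ((Real.sqrt n * ‖L‖) * (Real.sqrt n * ‖K‖)) := by
          have h1 := clm_sum_abs_le n L
          have h2 := clm_sum_abs_le n K
          have hs1 : (0:ℝ) ≤ ∑ j : Fin n, |L (EuclideanSpace.single j 1)| :=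
            Finset.sum_nonneg fun j _ => abs_nonneg _
          have hs2 : (0:ℝ) ≤ ∑ i : Fin n, |K (EuclideanSpace.single i 1)| :=
            Finset.sum_nonneg fun i _ => abs_nonneg _
          exact mul_le_mul_of_nonneg_left
            (mul_le_mul h1 h2 hs2 (by positivity)) hΛ0
      _ = (n:ℝ) * Λ * (‖L‖ * ‖K‖) := by
          have heq : Λ * ((Real.sqrt n * ‖L‖) * (Real.sqrt n * ‖K‖))
              = (Real.sqrt n * Real.sqrt n) * Λ * (‖L‖ * ‖K‖) := by ring
          rw [heq, hnn]
  have hbd2 : ∀ᵐ x ∂μ, |q x * (u x ^ m - udag x ^ m) * v x|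
      ≤ (m:ℝ) * qbar * CA ^ (m - 1) * (|u x - udag x| * |v x|) := by
    filter_upwards [hqb', hmem] with x hqx hxΩ
    have h2 := pow_sub_pow_abs_le m hm1 (hub x hxΩ) (hudagb x hxΩ)
    calc |q x * (u x ^ m - udag x ^ m) * v x|
        = |q x| * |u x ^ m - udag x ^ m| * |v x| := by rw [abs_mul, abs_mul]
      _ ≤ qbar * ((m:ℝ) * CA ^ (m - 1) * |u x - udag x|) * |v x| :=
          mul_le_mul_of_nonneg_right (mul_le_mul hqx h2 (abs_nonneg _) hqbar0) (abs_nonneg _)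
      _ = (m:ℝ) * qbar * CA ^ (m - 1) * (|u x - udag x| * |v x|) := by ring
  -- integral bounds
  have Ig1 : Integrable (fun x => (n:ℝ) * Λ *
      (‖fderiv ℝ u x - fderiv ℝ udag x‖ * ‖fderiv ℝ v x‖)) μ := by
    refine intOfBound _ ((n:ℝ) * Λ * (2 * Mg * Mv)) ?_ ?_
    · exact (continuous_const.mul ((hDu.sub hDud).norm.mul hDv.norm)).aestronglyMeasurable
    · filter_upwards [hmem] with x hx
      rw [Real.norm_eq_abs, abs_of_nonneg (by positivity)]
      refine mul_le_mul_of_nonneg_left ?_ (by positivity)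
      refine mul_le_mul ?_ (hMv x) (norm_nonneg _) (by linarith)
      calc ‖fderiv ℝ u x - fderiv ℝ udag x‖ ≤ ‖fderiv ℝ u x‖ + ‖fderiv ℝ udag x‖ :=
            norm_sub_le _ _
        _ ≤ 2 * Mg := by linarith [hgb x hx, hgdagb x hx]
  have Ig2 : Integrable (fun x => (m:ℝ) * qbar * CA ^ (m - 1) * (|u x - udag x| * |v x|)) μ := by
    refine intOfBound _ ((m:ℝ) * qbar * CA ^ (m - 1) * (2 * CA * Cv)) ?_ ?_
    · exact (continuous_const.mul
        ((hu.continuous.sub hudag.continuous).abs.mul hv.continuous.abs)).aestronglyMeasurable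
    · have hc2 : (0:ℝ) ≤ (m:ℝ) * qbar * CA ^ (m - 1) :=
        mul_nonneg (mul_nonneg (Nat.cast_nonneg m) hqbar0) (pow_nonneg hCA0 _)
      filter_upwards [hmem] with x hx
      rw [Real.norm_eq_abs, abs_of_nonneg (by positivity)]
      refine mul_le_mul_of_nonneg_left ?_ hc2
      refine mul_le_mul ?_ ((Real.norm_eq_abs (v x)) ▸ hCv x) (abs_nonneg _) (by linarith)
      calc |u x - udag x| ≤ |u x| + |udag x| := abs_sub _ _
        _ ≤ 2 * CA := by linarith [hub x hx, hudagb x hx]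
  have hI1 : ∫ x in Ω, |∑ i, ∑ j, σ x i j *
        (fderiv ℝ u x (EuclideanSpace.single j 1) - fderiv ℝ udag x (EuclideanSpace.single j 1)) *
        fderiv ℝ v x (EuclideanSpace.single i 1)|
      ≤ (n:ℝ) * Λ * ∫ x in Ω, ‖fderiv ℝ u x - fderiv ℝ udag x‖ * ‖fderiv ℝ v x‖ := by
    rw [← integral_const_mul]
    exact integral_mono_of_nonneg (Filter.Eventually.of_forall fun x => abs_nonneg _) Ig1 hbd1
  have hI2 : ∫ x in Ω, |q x * (u x ^ m - udag x ^ m) * v x|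
      ≤ (m:ℝ) * qbar * CA ^ (m - 1) * ∫ x in Ω, |u x - udag x| * |v x| := by
    rw [← integral_const_mul]
    exact integral_mono_of_nonneg (Filter.Eventually.of_forall fun x => abs_nonneg _) Ig2 hbd2
  -- put it all together
  have hc1 : (0:ℝ) ≤ (n:ℝ) * Λ := mul_nonneg (Nat.cast_nonneg n) hΛ0
  have hc2 : (0:ℝ) ≤ (m:ℝ) * qbar * CA ^ (m - 1) :=
    mul_nonneg (mul_nonneg (Nat.cast_nonneg m) hqbar0) (pow_nonneg hCA0 _)
  set X0 := (∫ x in Ω, |u x - udag x| ^ p) ^ (1 / p) with hX0def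
  set Xg := (∫ x in Ω, ‖fderiv ℝ u x - fderiv ℝ udag x‖ ^ p) ^ (1 / p) with hXgdef
  set Y0 := (∫ x in Ω, |v x| ^ p') ^ (1 / p') with hY0def
  set Yg := (∫ x in Ω, ‖fderiv ℝ v x‖ ^ p') ^ (1 / p') with hYgdef
  have hX0 : 0 ≤ X0 := Real.rpow_nonneg
    (integral_nonneg fun x => Real.rpow_nonneg (abs_nonneg _) _) _
  have hXg : 0 ≤ Xg := Real.rpow_nonneg
    (integral_nonneg fun x => Real.rpow_nonneg (norm_nonneg _) _) _
  have hY0 : 0 ≤ Y0 := Real.rpow_nonneg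
    (integral_nonneg fun x => Real.rpow_nonneg (abs_nonneg _) _) _
  have hYg : 0 ≤ Yg := Real.rpow_nonneg
    (integral_nonneg fun x => Real.rpow_nonneg (norm_nonneg _) _) _
  have hfinal1 : |∫ x in Ω, ∑ i, ∑ j, σ x i j *
        (fderiv ℝ u x (EuclideanSpace.single j 1) - fderiv ℝ udag x (EuclideanSpace.single j 1)) *
        fderiv ℝ v x (EuclideanSpace.single i 1)| ≤ (n:ℝ) * Λ * (Xg * Yg) := by
    refine le_trans (abs_int_le μ _) (le_trans hI1 ?_)
    exact mul_le_mul_of_nonneg_left hH1 hc1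
  have hfinal2 : |∫ x in Ω, q x * (u x ^ m - udag x ^ m) * v x|
      ≤ (m:ℝ) * qbar * CA ^ (m - 1) * (X0 * Y0) := by
    refine le_trans (abs_int_le μ _) (le_trans hI2 ?_)
    exact mul_le_mul_of_nonneg_left hH2 hc2
  rw [hkey]
  calc |(∫ x in Ω, ∑ i, ∑ j, σ x i j *
        (fderiv ℝ u x (EuclideanSpace.single j 1) - fderiv ℝ udag x (EuclideanSpace.single j 1)) *
        fderiv ℝ v x (EuclideanSpace.single i 1))
        + ∫ x in Ω, q x * (u x ^ m - udag x ^ m) * v x|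
      ≤ |∫ x in Ω, ∑ i, ∑ j, σ x i j *
        (fderiv ℝ u x (EuclideanSpace.single j 1) - fderiv ℝ udag x (EuclideanSpace.single j 1)) *
        fderiv ℝ v x (EuclideanSpace.single i 1)|
        + |∫ x in Ω, q x * (u x ^ m - udag x ^ m) * v x| := abs_add_le _ _
    _ ≤ (n:ℝ) * Λ * (Xg * Yg) + (m:ℝ) * qbar * CA ^ (m - 1) * (X0 * Y0) :=
        add_le_add hfinal1 hfinal2
    _ ≤ ((n:ℝ) * Λ + (m:ℝ) * qbar * CA ^ (m - 1)) * (X0 + Xg) * (Y0 + Yg) := by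
        nlinarith [mul_nonneg hc1 (mul_nonneg hX0 hY0), mul_nonneg hc1 (mul_nonneg hX0 hYg),
          mul_nonneg hc1 (mul_nonneg hXg hY0), mul_nonneg hc2 (mul_nonneg hX0 hYg),
          mul_nonneg hc2 (mul_nonneg hXg hY0), mul_nonneg hc2 (mul_nonneg hXg hYg)]
end

section
/- Let n ≥ 1, let Ω ⊂ ℝⁿ be a nonempty bounded open set, and let m be an odd natural number. Let σ : Ω → ℝ^{n×n} be measurable with |σ_{ij}(x)| ≤ Λ a.e. for all i,j, let f ∈ L¹(Ω), let q, q† : Ω → ℝ be measurable with 0 ≤ q ≤ q̄ a.e. and q† bounded, and let p ∈ [2,∞) with conjugate exponent p' = p/(p−1). Let u, u† : ℝⁿ → ℝ be continuously differentiable with sup_Ω |u| ≤ C_A and sup_Ω |u†| ≤ C_A and gradients bounded on Ω, with u†(x) > 0 for every x ∈ Ω, and assume the weak formulations ∫_Ω σ∇u·∇v dx + ∫_Ω q u^m v dx = ∫_Ω f v dx and ∫_Ω σ∇u†·∇v dx + ∫_Ω q† (u†)^m v dx = ∫_Ω f v dx hold for every continuously differentiable v with compact support contained in Ω. Then for every φ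 ∈ C_c^∞(Ω): |∫_Ω (q − q†) φ dx| ≤ (nΛ + m q̄ C_A^{m−1}) · ( ‖u−u†‖_{L^p(Ω)} + ‖∇(u−u†)‖_{L^p(Ω)} ) · ( ‖(u†)^{−m}φ‖_{L^{p'}(Ω)} + ‖∇((u†)^{−m}φ)‖_{L^{p'}(Ω)} ). -/
open MeasureTheory Metric Finset


lemma aux_sum_abs {n : ℕ} (L : EuclideanSpace ℝ (Fin n) →L[ℝ] ℝ) :
    ∑ i, |L (EuclideanSpace.single i 1)| ≤ Real.sqrt n * ‖L‖ := by
  set g := (InnerProductSpace.toDual ℝ (EuclideanSpace ℝ (Fin n))).symm L with hg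
  have happ : ∀ i, L (EuclideanSpace.single i 1) = g i := by
    intro i
    have h1 : L (EuclideanSpace.single i 1) = inner ℝ g (EuclideanSpace.single i (1:ℝ)) :=
      (InnerProductSpace.toDual_symm_apply).symm
    rw [h1, EuclideanSpace.inner_single_right]
    simp
  have hnorm : ‖L‖ = Real.sqrt (∑ i, (g i) ^ 2) := by
    rw [← (InnerProductSpace.toDual ℝ (EuclideanSpace ℝ (Fin n))).symm.norm_map L, ← hg,
      EuclideanSpace.norm_eq]
    congr 1
    refine Finset.sum_congr rfl fun i _ => ?_
    rw [Real.norm_eq_abs, sq_abs]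
  have hcs : (∑ i, |g i| * 1) ^ 2 ≤ (∑ i, |g i| ^ 2) * (∑ _i : Fin n, (1:ℝ) ^ 2) :=
    Finset.sum_mul_sq_le_sq_mul_sq _ _ _
  simp only [mul_one, one_pow, Finset.sum_const, Finset.card_univ, Fintype.card_fin,
    nsmul_eq_mul, sq_abs] at hcs
  have h0 : 0 ≤ ∑ i, |g i| := Finset.sum_nonneg fun i _ => abs_nonneg _
  calc ∑ i, |L (EuclideanSpace.single i 1)| = ∑ i, |g i| := by
        refine Finset.sum_congr rfl fun i _ => by rw [happ]
    _ = Real.sqrt ((∑ i, |g i|) ^ 2) := (Real.sqrt_sq h0).symm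
    _ ≤ Real.sqrt ((∑ i, (g i) ^ 2) * n) := Real.sqrt_le_sqrt (by linarith)
    _ = Real.sqrt n * ‖L‖ := by
        rw [hnorm, Real.sqrt_mul (Finset.sum_nonneg fun i _ => sq_nonneg _), mul_comm]

lemma aux_pow_sub (C : ℝ) : ∀ (m : ℕ) (a b : ℝ), |a| ≤ C → |b| ≤ C →
    |a ^ m - b ^ m| ≤ (m : ℝ) * C ^ (m - 1) * |a - b| := by
  intro m
  induction m with
  | zero => intro a b _ _; simp
  | succ k ih =>
    intro a b ha hb
    have hC : 0 ≤ C := (abs_nonneg a).trans ha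
    have h1 : |a ^ (k+1) - b ^ (k+1)| ≤ |a| ^ k * |a - b| + |b| * |a ^ k - b ^ k| := by
      calc |a ^ (k+1) - b ^ (k+1)| = |a ^ k * (a - b) + b * (a ^ k - b ^ k)| := by ring_nf
        _ ≤ |a ^ k * (a - b)| + |b * (a ^ k - b ^ k)| := abs_add_le _ _
        _ = |a| ^ k * |a - b| + |b| * |a ^ k - b ^ k| := by rw [abs_mul, abs_mul, abs_pow]
    have h2 : |a| ^ k ≤ C ^ k := pow_le_pow_left₀ (abs_nonneg a) ha k
    have h3 : |b| * |a ^ k - b ^ k| ≤ C * ((k : ℝ) * C ^ (k - 1) * |a - b|) :=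
      mul_le_mul hb (ih a b ha hb) (abs_nonneg _) hC
    have h4 : C * ((k : ℝ) * C ^ (k - 1)) ≤ (k : ℝ) * C ^ k := by
      cases k with
      | zero => simp
      | succ k' =>
        have : C * ((k'+1 : ℕ) * C ^ (k' + 1 - 1)) = ((k'+1 : ℕ) : ℝ) * C ^ (k' + 1) := by
          push_cast; ring
        rw [this]
    have h5 : (k + 1 : ℕ) - 1 = k := rfl
    rw [h5]
    have habs : 0 ≤ |a - b| := abs_nonneg _
    have h6 : C * ((k:ℝ) * C ^ (k-1) * |a - b|) ≤ (k:ℝ) * C ^ k * |a - b| := by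
      have := mul_le_mul_of_nonneg_right h4 habs
      nlinarith [this]
    push_cast
    nlinarith [mul_le_mul_of_nonneg_right h2 habs]

lemma aux_matrix_bound {n : ℕ} {Λ : ℝ} (hΛ : 0 ≤ Λ) (A : Matrix (Fin n) (Fin n) ℝ)
    (hA : ∀ i j, |A i j| ≤ Λ) (L M : EuclideanSpace ℝ (Fin n) →L[ℝ] ℝ) :
    |∑ i, ∑ j, A i j * L (EuclideanSpace.single j 1) * M (EuclideanSpace.single i 1)|
      ≤ (n : ℝ) * Λ * (‖L‖ * ‖M‖) := by
  set SL := ∑ j, |L (EuclideanSpace.single j 1)| with hSL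
  set SM := ∑ i, |M (EuclideanSpace.single i 1)| with hSM
  have hSL0 : 0 ≤ SL := Finset.sum_nonneg fun _ _ => abs_nonneg _
  have hSM0 : 0 ≤ SM := Finset.sum_nonneg fun _ _ => abs_nonneg _
  have h1 : |∑ i, ∑ j, A i j * L (EuclideanSpace.single j 1) * M (EuclideanSpace.single i 1)|
      ≤ Λ * (SL * SM) := by
    calc |∑ i, ∑ j, A i j * L (EuclideanSpace.single j 1) * M (EuclideanSpace.single i 1)|
        ≤ ∑ i, ∑ j, |A i j * L (EuclideanSpace.single j 1) * M (EuclideanSpace.single i 1)| := by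
          refine (Finset.abs_sum_le_sum_abs _ _).trans (Finset.sum_le_sum fun i _ => ?_)
          exact Finset.abs_sum_le_sum_abs _ _
      _ ≤ ∑ i, ∑ j, Λ * (|L (EuclideanSpace.single j 1)| * |M (EuclideanSpace.single i 1)|) := by
          refine Finset.sum_le_sum fun i _ => Finset.sum_le_sum fun j _ => ?_
          rw [abs_mul, abs_mul]
          have := mul_le_mul_of_nonneg_right
            (mul_le_mul_of_nonneg_right (hA i j) (abs_nonneg (L (EuclideanSpace.single j 1))))
            (abs_nonneg (M (EuclideanSpace.single i 1)))
          linarith [this]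
      _ = Λ * (SL * SM) := by
          rw [hSL, hSM, Finset.sum_mul_sum]
          rw [Finset.mul_sum, Finset.sum_comm]
          exact Finset.sum_congr rfl fun i _ => by rw [Finset.mul_sum]
  have hL := aux_sum_abs L
  have hM := aux_sum_abs M
  have hs : Real.sqrt n * Real.sqrt n = (n : ℝ) := Real.mul_self_sqrt (Nat.cast_nonneg n)
  have hprod : SL * SM ≤ (Real.sqrt n * ‖L‖) * (Real.sqrt n * ‖M‖) :=
    mul_le_mul hL hM hSM0 (mul_nonneg (Real.sqrt_nonneg _) (norm_nonneg _))
  have h2 : Λ * (SL * SM) ≤ Λ * ((Real.sqrt n * ‖L‖) * (Real.sqrt n * ‖M‖)) :=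
    mul_le_mul_of_nonneg_left hprod hΛ
  calc |∑ i, ∑ j, A i j * L (EuclideanSpace.single j 1) * M (EuclideanSpace.single i 1)|
      ≤ Λ * ((Real.sqrt n * ‖L‖) * (Real.sqrt n * ‖M‖)) := h1.trans h2
    _ = (n : ℝ) * Λ * (‖L‖ * ‖M‖) := by
        rw [show (Real.sqrt n * ‖L‖) * (Real.sqrt n * ‖M‖)
            = (Real.sqrt n * Real.sqrt n) * (‖L‖ * ‖M‖) by ring, hs]; ring

set_option maxHeartbeats 2000000 in
/-- Key inequality of the conditional stability theorem: testing the subtracted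
weak formulations with `v = (u†)^{-m} φ` bounds `|∫ (q - q†) φ|` by the
`W^{1,p}` distance of the states times the weighted `W^{1,p'}` norm of `φ`. -/
theorem stmt_9 (n : ℕ) (hn : 1 ≤ n) (Ω : Set (EuclideanSpace ℝ (Fin n)))
    (hΩo : IsOpen Ω) (hΩne : Ω.Nonempty) (hΩb : Bornology.IsBounded Ω)
    (m l : ℕ) (hm : m = 2 * l + 1)
    (σ : EuclideanSpace ℝ (Fin n) → Matrix (Fin n) (Fin n) ℝ)
    (hσmeas : ∀ i j, Measurable fun x => σ x i j)
    (Λ : ℝ) (hσbd : ∀ᵐ x ∂(volume.restrict Ω), ∀ i j, |σ x i j| ≤ Λ)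
    (f : EuclideanSpace ℝ (Fin n) → ℝ) (hf : IntegrableOn f Ω)
    (q qdag : EuclideanSpace ℝ (Fin n) → ℝ)
    (hqmeas : Measurable q) (hqdagmeas : Measurable qdag)
    (qbar : ℝ) (hq : ∀ᵐ x ∂(volume.restrict Ω), 0 ≤ q x ∧ q x ≤ qbar)
    (Mdag : ℝ) (hqdagbd : ∀ x ∈ Ω, |qdag x| ≤ Mdag)
    (p p' : ℝ) (hp : 2 ≤ p) (hp' : p' = p / (p - 1))
    (u udag : EuclideanSpace ℝ (Fin n) → ℝ)
    (hu : ContDiff ℝ 1 u) (hudag : ContDiff ℝ 1 udag)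
    (CA : ℝ) (hub : ∀ x ∈ Ω, |u x| ≤ CA) (hudagb : ∀ x ∈ Ω, |udag x| ≤ CA)
    (Mg : ℝ) (hgb : ∀ x ∈ Ω, ‖fderiv ℝ u x‖ ≤ Mg)
    (hgdagb : ∀ x ∈ Ω, ‖fderiv ℝ udag x‖ ≤ Mg)
    (hpos : ∀ x ∈ Ω, 0 < udag x)
    (hweak : ∀ v : EuclideanSpace ℝ (Fin n) → ℝ, ContDiff ℝ 1 v →
      HasCompactSupport v → tsupport v ⊆ Ω →
      (∫ x in Ω, ∑ i, ∑ j, σ x i j * fderiv ℝ u x (EuclideanSpace.single j 1) *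
          fderiv ℝ v x (EuclideanSpace.single i 1)) +
        ∫ x in Ω, q x * u x ^ m * v x = ∫ x in Ω, f x * v x)
    (hweakdag : ∀ v : EuclideanSpace ℝ (Fin n) → ℝ, ContDiff ℝ 1 v →
      HasCompactSupport v → tsupport v ⊆ Ω →
      (∫ x in Ω, ∑ i, ∑ j, σ x i j * fderiv ℝ udag x (EuclideanSpace.single j 1) *
          fderiv ℝ v x (EuclideanSpace.single i 1)) +
        ∫ x in Ω, qdag x * udag x ^ m * v x = ∫ x in Ω, f x * v x) :
    ∀ φ : EuclideanSpace ℝ (Fin n) → ℝ, ContDiff ℝ (⊤ : ℕ∞) φ →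
      HasCompactSupport φ → tsupport φ ⊆ Ω →
      |∫ x in Ω, (q x - qdag x) * φ x| ≤
        ((n : ℝ) * Λ + (m : ℝ) * qbar * CA ^ (m - 1)) *
          ((∫ x in Ω, |u x - udag x| ^ p) ^ (1 / p) +
            (∫ x in Ω, ‖fderiv ℝ u x - fderiv ℝ udag x‖ ^ p) ^ (1 / p)) *
          ((∫ x in Ω, |φ x / udag x ^ m| ^ p') ^ (1 / p') +
            (∫ x in Ω, ‖fderiv ℝ (fun y => φ y / udag y ^ m) x‖ ^ p') ^ (1 / p')) := by
  intro φ hφ hφc hφs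
  classical
  have hΩm : MeasurableSet Ω := hΩo.measurableSet
  have hfin : volume Ω < ⊤ := hΩb.measure_lt_top
  haveI : IsFiniteMeasure (volume.restrict Ω) := ⟨by rwa [Measure.restrict_apply_univ]⟩
  have haeΩ : ∀ᵐ x ∂(volume.restrict Ω), x ∈ Ω := ae_restrict_mem hΩm
  -- basic nonnegativity facts
  haveI hne : (ae (volume.restrict Ω)).NeBot := by
    rw [ae_neBot]
    intro h0
    have := hΩo.measure_pos (μ := volume) hΩne
    rw [← Measure.restrict_apply_univ] at this
    simp [h0] at this
  obtain ⟨x₀, hx₀Ω, hx₀σ, hx₀q⟩ := (haeΩ.and (hσbd.and hq)).exists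
  have hΛ : 0 ≤ Λ := (abs_nonneg _).trans (hx₀σ ⟨0, hn⟩ ⟨0, hn⟩)
  have hqbar : 0 ≤ qbar := hx₀q.1.trans hx₀q.2
  have hCA : 0 ≤ CA := (abs_nonneg _).trans (hub x₀ hx₀Ω)
  have hMg : 0 ≤ Mg := (norm_nonneg _).trans (hgb x₀ hx₀Ω)
  have hMdag : 0 ≤ Mdag := (abs_nonneg _).trans (hqdagbd x₀ hx₀Ω)
  -- conjugate exponents
  have hp1 : (1:ℝ) < p := lt_of_lt_of_le one_lt_two hp
  have hpq : p.HolderConjugate p' := by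
    rw [hp']; exact Real.HolderConjugate.conjExponent hp1
  -- the test function v
  set v : EuclideanSpace ℝ (Fin n) → ℝ := fun y => φ y / udag y ^ m with hvdef
  have hsupp : Function.support v ⊆ Function.support φ := by
    intro x hx
    simp only [Function.mem_support] at hx ⊢
    intro h0
    exact hx (by simp [hvdef, h0])
  have hvc : HasCompactSupport v := hφc.mono hsupp
  have hvs : tsupport v ⊆ Ω := (closure_mono hsupp).trans hφs
  have hv : ContDiff ℝ 1 v := by
    rw [contDiff_iff_contDiffAt]
    intro x
    by_cases hx : x ∈ tsupport φ
    · have hxΩ : x ∈ Ω := hφs hx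
      have h0 : udag x ^ m ≠ 0 := (pow_pos (hpos x hxΩ) m).ne'
      exact ((hφ.of_le (by exact_mod_cast le_top)).contDiffAt).div ((hudag.contDiffAt).pow m) h0
    · have hop : ∀ᶠ y in nhds x, y ∉ tsupport φ :=
        (isOpen_compl_iff.mpr (isClosed_tsupport φ)).mem_nhds hx
      have hev : v =ᶠ[nhds x] fun _ => (0:ℝ) := by
        filter_upwards [hop] with y hy
        simp [hvdef, image_eq_zero_of_notMem_tsupport hy]
      have hc : ContDiffAt ℝ 1 (fun _ : EuclideanSpace ℝ (Fin n) => (0:ℝ)) x := contDiffAt_const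
      exact hc.congr_of_eventuallyEq hev
  -- bounds for v and its derivative
  obtain ⟨Cv, hCv⟩ := hv.continuous.bounded_above_of_compact_support hvc
  have hDvc : HasCompactSupport (fderiv ℝ v) := hvc.fderiv ℝ
  obtain ⟨Cv', hCv'⟩ := (hv.continuous_fderiv one_ne_zero).bounded_above_of_compact_support hDvc
  have hCv0 : 0 ≤ Cv := (norm_nonneg _).trans (hCv x₀)
  have hCv'0 : 0 ≤ Cv' := (norm_nonneg _).trans (hCv' x₀)
  -- integrability from boundedness
  have int_of_bd : ∀ (g : EuclideanSpace ℝ (Fin n) → ℝ) (C : ℝ),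
      AEStronglyMeasurable g (volume.restrict Ω) →
      (∀ᵐ x ∂(volume.restrict Ω), ‖g x‖ ≤ C) → Integrable g (volume.restrict Ω) :=
    fun g C hmg hb => memLp_one_iff_integrable.mp (MemLp.of_bound hmg C hb)
  -- continuity facts
  have hcontDu : Continuous fun x => fderiv ℝ u x := hu.continuous_fderiv one_ne_zero
  have hcontDudag : Continuous fun x => fderiv ℝ udag x := hudag.continuous_fderiv one_ne_zero
  have hcontDv : Continuous fun x => fderiv ℝ v x := hv.continuous_fderiv one_ne_zero
  -- MemLp facts for the Hölder inequality
  have hmw : MemLp (fun x => u x - udag x) (ENNReal.ofReal p) (volume.restrict Ω) := by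
    refine MemLp.of_bound ((hu.continuous.sub hudag.continuous).aestronglyMeasurable) (CA + CA) ?_
    filter_upwards [haeΩ] with x hx
    rw [Real.norm_eq_abs]
    exact (abs_sub _ _).trans (add_le_add (hub x hx) (hudagb x hx))
  have hmDw : MemLp (fun x => fderiv ℝ u x - fderiv ℝ udag x) (ENNReal.ofReal p)
      (volume.restrict Ω) := by
    refine MemLp.of_bound ((hcontDu.sub hcontDudag).aestronglyMeasurable) (Mg + Mg) ?_
    filter_upwards [haeΩ] with x hx
    exact (norm_sub_le _ _).trans (add_le_add (hgb x hx) (hgdagb x hx))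
  have hmv : MemLp v (ENNReal.ofReal p') (volume.restrict Ω) :=
    MemLp.of_bound hv.continuous.aestronglyMeasurable Cv (Filter.Eventually.of_forall hCv)
  have hmDv : MemLp (fun x => fderiv ℝ v x) (ENNReal.ofReal p') (volume.restrict Ω) :=
    MemLp.of_bound hcontDv.aestronglyMeasurable Cv' (Filter.Eventually.of_forall hCv')
  -- Hölder inequalities
  have Holder1 := integral_mul_norm_le_Lp_mul_Lq hpq hmw hmv
  have Holder2 := integral_mul_norm_le_Lp_mul_Lq hpq hmDw hmDv
  simp only [Real.norm_eq_abs] at Holder1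
  -- measurability of evaluations
  have hmev : ∀ (g : EuclideanSpace ℝ (Fin n) → (EuclideanSpace ℝ (Fin n) →L[ℝ] ℝ)),
      Continuous g → ∀ c, Measurable fun x => g x c :=
    fun g hg c => ((ContinuousLinearMap.apply ℝ ℝ c).continuous.comp hg).measurable
  -- integrability of the various integrands
  have iA : Integrable (fun x => ∑ i, ∑ j, σ x i j *
      fderiv ℝ u x (EuclideanSpace.single j 1) * fderiv ℝ v x (EuclideanSpace.single i 1))
      (volume.restrict Ω) := by
    refine int_of_bd _ ((n:ℝ) * Λ * (Mg * Cv')) ?_ ?_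
    · exact (Finset.measurable_sum _ fun i _ => Finset.measurable_sum _ fun j _ =>
        ((hσmeas i j).mul (hmev _ hcontDu _)).mul (hmev _ hcontDv _)).aestronglyMeasurable
    · filter_upwards [haeΩ, hσbd] with x hx hσx
      rw [Real.norm_eq_abs]
      refine (aux_matrix_bound hΛ (σ x) hσx _ _).trans ?_
      exact mul_le_mul_of_nonneg_left
        (mul_le_mul (hgb x hx) (hCv' x) (norm_nonneg _) hMg) (by positivity)
  have iAdag : Integrable (fun x => ∑ i, ∑ j, σ x i j *
      fderiv ℝ udag x (EuclideanSpace.single j 1) * fderiv ℝ v x (EuclideanSpace.single i 1))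
      (volume.restrict Ω) := by
    refine int_of_bd _ ((n:ℝ) * Λ * (Mg * Cv')) ?_ ?_
    · exact (Finset.measurable_sum _ fun i _ => Finset.measurable_sum _ fun j _ =>
        ((hσmeas i j).mul (hmev _ hcontDudag _)).mul (hmev _ hcontDv _)).aestronglyMeasurable
    · filter_upwards [haeΩ, hσbd] with x hx hσx
      rw [Real.norm_eq_abs]
      refine (aux_matrix_bound hΛ (σ x) hσx _ _).trans ?_
      exact mul_le_mul_of_nonneg_left
        (mul_le_mul (hgdagb x hx) (hCv' x) (norm_nonneg _) hMg) (by positivity)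
  have iD : Integrable (fun x => ∑ i, ∑ j, σ x i j *
      ((fderiv ℝ u x - fderiv ℝ udag x) (EuclideanSpace.single j 1)) *
      fderiv ℝ v x (EuclideanSpace.single i 1)) (volume.restrict Ω) := by
    refine int_of_bd _ ((n:ℝ) * Λ * ((Mg + Mg) * Cv')) ?_ ?_
    · exact (Finset.measurable_sum _ fun i _ => Finset.measurable_sum _ fun j _ =>
        ((hσmeas i j).mul (hmev _ (hcontDu.sub hcontDudag) _)).mul
          (hmev _ hcontDv _)).aestronglyMeasurable
    · filter_upwards [haeΩ, hσbd] with x hx hσx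
      rw [Real.norm_eq_abs]
      refine (aux_matrix_bound hΛ (σ x) hσx _ _).trans ?_
      refine mul_le_mul_of_nonneg_left
        (mul_le_mul ?_ (hCv' x) (norm_nonneg _) (by linarith)) (by positivity)
      exact (norm_sub_le _ _).trans (add_le_add (hgb x hx) (hgdagb x hx))
  have iB : Integrable (fun x => q x * u x ^ m * v x) (volume.restrict Ω) := by
    refine int_of_bd _ (qbar * CA ^ m * Cv) ?_ ?_
    · exact ((hqmeas.mul (hu.continuous.pow m).measurable).mul
        hv.continuous.measurable).aestronglyMeasurable
    · filter_upwards [haeΩ, hq] with x hx hqx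
      rw [Real.norm_eq_abs, abs_mul, abs_mul]
      have h1 : |q x| ≤ qbar := by rw [abs_of_nonneg hqx.1]; exact hqx.2
      have h2 : |u x ^ m| ≤ CA ^ m := by
        rw [abs_pow]; exact pow_le_pow_left₀ (abs_nonneg _) (hub x hx) m
      have h3 : |v x| ≤ Cv := by rw [← Real.norm_eq_abs]; exact hCv x
      exact mul_le_mul (mul_le_mul h1 h2 (abs_nonneg _) hqbar) h3 (abs_nonneg _) (by positivity)
  have iBdag : Integrable (fun x => qdag x * udag x ^ m * v x) (volume.restrict Ω) := by
    refine int_of_bd _ (Mdag * CA ^ m * Cv) ?_ ?_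
    · exact ((hqdagmeas.mul (hudag.continuous.pow m).measurable).mul
        hv.continuous.measurable).aestronglyMeasurable
    · filter_upwards [haeΩ] with x hx
      rw [Real.norm_eq_abs, abs_mul, abs_mul]
      have h2 : |udag x ^ m| ≤ CA ^ m := by
        rw [abs_pow]; exact pow_le_pow_left₀ (abs_nonneg _) (hudagb x hx) m
      have h3 : |v x| ≤ Cv := by rw [← Real.norm_eq_abs]; exact hCv x
      exact mul_le_mul (mul_le_mul (hqdagbd x hx) h2 (abs_nonneg _) hMdag) h3
        (abs_nonneg _) (by positivity)
  have iC : Integrable (fun x => q x * (udag x ^ m - u x ^ m) * v x) (volume.restrict Ω) := by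
    refine int_of_bd _ (qbar * (CA ^ m + CA ^ m) * Cv) ?_ ?_
    · exact ((hqmeas.mul ((hudag.continuous.pow m).sub
        (hu.continuous.pow m)).measurable).mul hv.continuous.measurable).aestronglyMeasurable
    · filter_upwards [haeΩ, hq] with x hx hqx
      rw [Real.norm_eq_abs, abs_mul, abs_mul]
      have h1 : |q x| ≤ qbar := by rw [abs_of_nonneg hqx.1]; exact hqx.2
      have h2 : |udag x ^ m - u x ^ m| ≤ CA ^ m + CA ^ m := by
        refine (abs_sub _ _).trans (add_le_add ?_ ?_) <;> rw [abs_pow] <;>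
          exact pow_le_pow_left₀ (abs_nonneg _) (by first | exact hudagb x hx | exact hub x hx) m
      have h3 : |v x| ≤ Cv := by rw [← Real.norm_eq_abs]; exact hCv x
      exact mul_le_mul (mul_le_mul h1 h2 (abs_nonneg _) hqbar) h3 (abs_nonneg _) (by positivity)
  -- subtract the weak formulations
  have hWu := hweak v hv hvc hvs
  have hWd := hweakdag v hv hvc hvs
  have h4 : (∫ x in Ω, ∑ i, ∑ j, σ x i j *
        ((fderiv ℝ u x - fderiv ℝ udag x) (EuclideanSpace.single j 1)) *
        fderiv ℝ v x (EuclideanSpace.single i 1))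
      = (∫ x in Ω, ∑ i, ∑ j, σ x i j * fderiv ℝ u x (EuclideanSpace.single j 1) *
          fderiv ℝ v x (EuclideanSpace.single i 1))
        - ∫ x in Ω, ∑ i, ∑ j, σ x i j * fderiv ℝ udag x (EuclideanSpace.single j 1) *
          fderiv ℝ v x (EuclideanSpace.single i 1) := by
    rw [← integral_sub iA iAdag]
    refine integral_congr_ae (Filter.Eventually.of_forall fun x => ?_)
    simp only [ContinuousLinearMap.sub_apply]
    rw [← Finset.sum_sub_distrib]
    refine Finset.sum_congr rfl fun i _ => ?_
    rw [← Finset.sum_sub_distrib]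
    refine Finset.sum_congr rfl fun j _ => ?_
    ring
  have h5 : (∫ x in Ω, (q x * u x ^ m * v x - qdag x * udag x ^ m * v x))
      = - ∫ x in Ω, ∑ i, ∑ j, σ x i j *
        ((fderiv ℝ u x - fderiv ℝ udag x) (EuclideanSpace.single j 1)) *
        fderiv ℝ v x (EuclideanSpace.single i 1) := by
    rw [integral_sub iB iBdag]
    linarith [hWu, hWd, h4]
  have hkey : ∫ x in Ω, (q x - qdag x) * φ x
      = (- ∫ x in Ω, ∑ i, ∑ j, σ x i j *
          ((fderiv ℝ u x - fderiv ℝ udag x) (EuclideanSpace.single j 1)) *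
          fderiv ℝ v x (EuclideanSpace.single i 1))
        + ∫ x in Ω, q x * (udag x ^ m - u x ^ m) * v x := by
    have hpt : Set.EqOn (fun x => (q x - qdag x) * φ x)
        (fun x => (q x * u x ^ m * v x - qdag x * udag x ^ m * v x)
          + q x * (udag x ^ m - u x ^ m) * v x) Ω := by
      intro x hx
      have h0 : udag x ^ m ≠ 0 := (pow_pos (hpos x hx) m).ne'
      have hphi : udag x ^ m * v x = φ x := by
        simp only [hvdef]
        field_simp
      simp only
      rw [← hphi]; ring
    have iBsub : Integrable (fun x => q x * u x ^ m * v x - qdag x * udag x ^ m * v x)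
        (volume.restrict Ω) := iB.sub iBdag
    rw [setIntegral_congr_fun hΩm hpt, integral_add iBsub iC, h5]
  -- constants
  have hK1 : 0 ≤ (n:ℝ) * Λ := mul_nonneg (Nat.cast_nonneg n) hΛ
  have hK2 : 0 ≤ (m:ℝ) * qbar * CA ^ (m - 1) :=
    mul_nonneg (mul_nonneg (Nat.cast_nonneg m) hqbar) (pow_nonneg hCA _)
  -- bound on the gradient term
  have ib1 : Integrable (fun x => (n:ℝ) * Λ *
      (‖fderiv ℝ u x - fderiv ℝ udag x‖ * ‖fderiv ℝ v x‖)) (volume.restrict Ω) := by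
    refine int_of_bd _ ((n:ℝ) * Λ * ((Mg + Mg) * Cv')) ?_ ?_
    · exact (continuous_const.mul
        ((hcontDu.sub hcontDudag).norm.mul hcontDv.norm)).aestronglyMeasurable
    · filter_upwards [haeΩ] with x hx
      rw [Real.norm_eq_abs, abs_of_nonneg (by positivity)]
      refine mul_le_mul_of_nonneg_left ?_ hK1
      refine mul_le_mul ?_ (hCv' x) (norm_nonneg _) (by linarith)
      exact (norm_sub_le _ _).trans (add_le_add (hgb x hx) (hgdagb x hx))
  have hb1 : |∫ x in Ω, ∑ i, ∑ j, σ x i j *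
        ((fderiv ℝ u x - fderiv ℝ udag x) (EuclideanSpace.single j 1)) *
        fderiv ℝ v x (EuclideanSpace.single i 1)|
      ≤ (n:ℝ) * Λ * ((∫ x in Ω, ‖fderiv ℝ u x - fderiv ℝ udag x‖ ^ p) ^ (1 / p) *
          (∫ x in Ω, ‖fderiv ℝ v x‖ ^ p') ^ (1 / p')) := by
    calc |∫ x in Ω, ∑ i, ∑ j, σ x i j *
          ((fderiv ℝ u x - fderiv ℝ udag x) (EuclideanSpace.single j 1)) *
          fderiv ℝ v x (EuclideanSpace.single i 1)|
        ≤ ∫ x in Ω, |∑ i, ∑ j, σ x i j *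
          ((fderiv ℝ u x - fderiv ℝ udag x) (EuclideanSpace.single j 1)) *
          fderiv ℝ v x (EuclideanSpace.single i 1)| := by
          simpa only [Real.norm_eq_abs] using norm_integral_le_integral_norm (μ := volume.restrict Ω)
            (f := fun x => ∑ i, ∑ j, σ x i j *
              ((fderiv ℝ u x - fderiv ℝ udag x) (EuclideanSpace.single j 1)) *
              fderiv ℝ v x (EuclideanSpace.single i 1))
      _ ≤ ∫ x in Ω, (n:ℝ) * Λ * (‖fderiv ℝ u x - fderiv ℝ udag x‖ * ‖fderiv ℝ v x‖) := by
          refine integral_mono_ae iD.abs ib1 ?_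
          filter_upwards [haeΩ, hσbd] with x hx hσx
          exact aux_matrix_bound hΛ (σ x) hσx _ _
      _ = (n:ℝ) * Λ * ∫ x in Ω, ‖fderiv ℝ u x - fderiv ℝ udag x‖ * ‖fderiv ℝ v x‖ :=
          integral_const_mul _ _
      _ ≤ (n:ℝ) * Λ * ((∫ x in Ω, ‖fderiv ℝ u x - fderiv ℝ udag x‖ ^ p) ^ (1 / p) *
          (∫ x in Ω, ‖fderiv ℝ v x‖ ^ p') ^ (1 / p')) :=
          mul_le_mul_of_nonneg_left Holder2 hK1
  -- bound on the potential term
  have ib2 : Integrable (fun x => ((m:ℝ) * qbar * CA ^ (m - 1)) *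
      (|u x - udag x| * |v x|)) (volume.restrict Ω) := by
    refine int_of_bd _ (((m:ℝ) * qbar * CA ^ (m - 1)) * ((CA + CA) * Cv)) ?_ ?_
    · exact (continuous_const.mul
        ((hu.continuous.sub hudag.continuous).abs.mul hv.continuous.abs)).aestronglyMeasurable
    · filter_upwards [haeΩ] with x hx
      rw [Real.norm_eq_abs, abs_of_nonneg (by positivity)]
      refine mul_le_mul_of_nonneg_left ?_ hK2
      refine mul_le_mul ((abs_sub _ _).trans (add_le_add (hub x hx) (hudagb x hx)))
        (by rw [← Real.norm_eq_abs]; exact hCv x) (abs_nonneg _) (by linarith)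
  have hb2 : |∫ x in Ω, q x * (udag x ^ m - u x ^ m) * v x|
      ≤ ((m:ℝ) * qbar * CA ^ (m - 1)) * ((∫ x in Ω, |u x - udag x| ^ p) ^ (1 / p) *
          (∫ x in Ω, |v x| ^ p') ^ (1 / p')) := by
    calc |∫ x in Ω, q x * (udag x ^ m - u x ^ m) * v x|
        ≤ ∫ x in Ω, |q x * (udag x ^ m - u x ^ m) * v x| := by
          simpa only [Real.norm_eq_abs] using norm_integral_le_integral_norm (μ := volume.restrict Ω)
            (f := fun x => q x * (udag x ^ m - u x ^ m) * v x)
      _ ≤ ∫ x in Ω, ((m:ℝ) * qbar * CA ^ (m - 1)) * (|u x - udag x| * |v x|) := by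
          refine integral_mono_ae iC.abs ib2 ?_
          filter_upwards [haeΩ, hq] with x hx hqx
          have hps : |udag x ^ m - u x ^ m| ≤ (m:ℝ) * CA ^ (m - 1) * |u x - udag x| := by
            rw [abs_sub_comm (u x) (udag x)]
            exact aux_pow_sub CA m (udag x) (u x) (hudagb x hx) (hub x hx)
          have h1 : |q x| ≤ qbar := by rw [abs_of_nonneg hqx.1]; exact hqx.2
          calc |q x * (udag x ^ m - u x ^ m) * v x|
              = |q x| * |udag x ^ m - u x ^ m| * |v x| := by rw [abs_mul, abs_mul]
            _ ≤ qbar * ((m:ℝ) * CA ^ (m - 1) * |u x - udag x|) * |v x| := by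
                refine mul_le_mul (mul_le_mul h1 hps (abs_nonneg _) hqbar) le_rfl (abs_nonneg _) ?_
                have : 0 ≤ (m:ℝ) * CA ^ (m - 1) * |u x - udag x| :=
                  mul_nonneg (mul_nonneg (Nat.cast_nonneg m) (pow_nonneg hCA _)) (abs_nonneg _)
                exact mul_nonneg hqbar this
            _ = ((m:ℝ) * qbar * CA ^ (m - 1)) * (|u x - udag x| * |v x|) := by ring
      _ = ((m:ℝ) * qbar * CA ^ (m - 1)) * ∫ x in Ω, |u x - udag x| * |v x| :=
          integral_const_mul _ _
      _ ≤ ((m:ℝ) * qbar * CA ^ (m - 1)) * ((∫ x in Ω, |u x - udag x| ^ p) ^ (1 / p) *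
          (∫ x in Ω, |v x| ^ p') ^ (1 / p')) := mul_le_mul_of_nonneg_left Holder1 hK2
  -- put things together
  have hfinal : |∫ x in Ω, (q x - qdag x) * φ x|
      ≤ (n:ℝ) * Λ * ((∫ x in Ω, ‖fderiv ℝ u x - fderiv ℝ udag x‖ ^ p) ^ (1 / p) *
          (∫ x in Ω, ‖fderiv ℝ v x‖ ^ p') ^ (1 / p'))
        + ((m:ℝ) * qbar * CA ^ (m - 1)) * ((∫ x in Ω, |u x - udag x| ^ p) ^ (1 / p) *
          (∫ x in Ω, |v x| ^ p') ^ (1 / p')) := by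
    rw [hkey]
    refine (abs_add_le _ _).trans ?_
    rw [abs_neg]
    exact add_le_add hb1 hb2
  have hY1eq : (∫ x in Ω, |φ x / udag x ^ m| ^ p') = ∫ x in Ω, |v x| ^ p' := rfl
  rw [hY1eq]
  have hX1 : 0 ≤ (∫ x in Ω, |u x - udag x| ^ p) ^ (1 / p) :=
    Real.rpow_nonneg (integral_nonneg fun x => Real.rpow_nonneg (abs_nonneg _) _) _
  have hX2 : 0 ≤ (∫ x in Ω, ‖fderiv ℝ u x - fderiv ℝ udag x‖ ^ p) ^ (1 / p) :=
    Real.rpow_nonneg (integral_nonneg fun x => Real.rpow_nonneg (norm_nonneg _) _) _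
  have hY1 : 0 ≤ (∫ x in Ω, |v x| ^ p') ^ (1 / p') :=
    Real.rpow_nonneg (integral_nonneg fun x => Real.rpow_nonneg (abs_nonneg _) _) _
  have hY2 : 0 ≤ (∫ x in Ω, ‖fderiv ℝ v x‖ ^ p') ^ (1 / p') :=
    Real.rpow_nonneg (integral_nonneg fun x => Real.rpow_nonneg (norm_nonneg _) _) _
  nlinarith [hfinal,
    mul_nonneg (mul_nonneg hK1 hX1) hY1,
    mul_nonneg (mul_nonneg hK1 hX1) hY2,
    mul_nonneg (mul_nonneg hK1 hX2) hY1,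
    mul_nonneg (mul_nonneg hK2 hX1) hY2,
    mul_nonneg (mul_nonneg hK2 hX2) hY1,
    mul_nonneg (mul_nonneg hK2 hX2) hY2]
end
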